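/- arXiv:1705.04208 — 5 statements merged into one kernel-verified Lean document; each statement's English description precedes it below -/
import Mathlib

section
/- Let v₁, v̂₁ be linearly independent vectors in ℝ², let p, q, a, b be integers with p > 0 and b·q − a·p = 1, and set v₂ = q·v₁ + p·v̂₁ and v̂₂ = a·v₁ + b·v̂₁. Write θ₁ = ⟨v₁, v̂₁⟩/‖v₁‖², t₁ = ‖v̂₁ − θ₁·v₁‖, and θ₂ = ⟨v₂, v̂₂⟩/‖v₂‖². Then ⟨v₁, v₂⟩ = 0 if and only if θ₁ = −q/p; and in that case ‖v₂‖ = p·t₁ and θ₂ = b/p. -/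
noncomputable section

/-- The plane `ℝ²` with its standard inner product, norm and orientation. -/
abbrev E2 : Type := EuclideanSpace ℝ (Fin 2)

/-- orthogonality of `v₁` and `v₂ = q·v₁ + p·w₁` is equivalent to
`θ₁ = −q/p`, and in that case `‖v₂‖ = p·t₁` and `θ₂ = b/p`
(`wᵢ` plays the role of `v̂ᵢ`). -/
theorem orthogonal_foliations_iff
    (v₁ w₁ : E2) (hli : LinearIndependent ℝ ![v₁, w₁])
    (p q a b : ℤ) (hp : 0 < p) (hdet : b * q - a * p = 1)
    (v₂ w₂ : E2) (hv2 : v₂ = q • v₁ + p • w₁) (hw2 : w₂ = a • v₁ + b • w₁)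
    (θ₁ t₁ θ₂ : ℝ)
    (hθ₁ : θ₁ = (inner ℝ v₁ w₁ : ℝ) / ‖v₁‖ ^ 2)
    (ht₁ : t₁ = ‖w₁ - θ₁ • v₁‖)
    (hθ₂ : θ₂ = (inner ℝ v₂ w₂ : ℝ) / ‖v₂‖ ^ 2) :
    ((inner ℝ v₁ v₂ : ℝ) = 0 ↔ θ₁ = -((q : ℝ) / (p : ℝ))) ∧
    ((inner ℝ v₁ v₂ : ℝ) = 0 → ‖v₂‖ = (p : ℝ) * t₁ ∧ θ₂ = (b : ℝ) / (p : ℝ)) := by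
  rw [LinearIndependent.pair_iff] at hli
  have hv1 : v₁ ≠ 0 := by
    intro h
    have := (hli 1 0 (by simp [h])).1
    norm_num at this
  have hwθ : w₁ - θ₁ • v₁ ≠ 0 := by
    intro h
    have h' : (-θ₁) • v₁ + (1 : ℝ) • w₁ = 0 := by
      rw [neg_smul, one_smul, neg_add_eq_sub]; exact h
    exact one_ne_zero (hli _ _ h').2
  have hpR : (0:ℝ) < (p:ℝ) := by exact_mod_cast hp
  have hpne : (p:ℝ) ≠ 0 := ne_of_gt hpR
  have hn1 : (0:ℝ) < ‖v₁‖ ^ 2 := pow_pos (norm_pos_iff.mpr hv1) 2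
  have ht1pos : 0 < t₁ := ht₁ ▸ norm_pos_iff.mpr hwθ
  have hqv : (q : ℤ) • v₁ = (q:ℝ) • v₁ := (Int.cast_smul_eq_zsmul ℝ q v₁).symm
  have hpw : (p : ℤ) • w₁ = (p:ℝ) • w₁ := (Int.cast_smul_eq_zsmul ℝ p w₁).symm
  have hav : (a : ℤ) • v₁ = (a:ℝ) • v₁ := (Int.cast_smul_eq_zsmul ℝ a v₁).symm
  have hbw : (b : ℤ) • w₁ = (b:ℝ) • w₁ := (Int.cast_smul_eq_zsmul ℝ b w₁).symm
  have hinner : (inner ℝ v₁ v₂ : ℝ) = (q:ℝ) * ‖v₁‖ ^ 2 + (p:ℝ) * (inner ℝ v₁ w₁ : ℝ) := by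
    rw [hv2, hqv, hpw, inner_add_right, real_inner_smul_right, real_inner_smul_right,
      real_inner_self_eq_norm_sq]
  have hiff : (inner ℝ v₁ v₂ : ℝ) = 0 ↔ θ₁ = -((q : ℝ) / (p : ℝ)) := by
    rw [hinner, hθ₁, ← neg_div, div_eq_div_iff hn1.ne' hpne]
    constructor <;> intro h <;> linarith [h]
  refine ⟨hiff, fun horth => ?_⟩
  have hθval : θ₁ = -((q : ℝ) / (p : ℝ)) := hiff.mp horth
  have hv2' : v₂ = (p:ℝ) • (w₁ - θ₁ • v₁) := by
    rw [hv2, hqv, hpw, smul_sub, smul_smul, hθval]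
    have hpq : (p:ℝ) * -((q:ℝ)/(p:ℝ)) = -(q:ℝ) := by
      field_simp
    rw [hpq, neg_smul, sub_neg_eq_add, add_comm]
  have hnorm : ‖v₂‖ = (p:ℝ) * t₁ := by
    rw [hv2', norm_smul, ht₁, Real.norm_eq_abs, abs_of_pos hpR]
  refine ⟨hnorm, ?_⟩
  have hiv : (inner ℝ v₂ v₁ : ℝ) = 0 := by rw [real_inner_comm]; exact horth
  have h1 : (inner ℝ v₂ (w₁ - θ₁ • v₁) : ℝ)
      = (inner ℝ v₂ w₁ : ℝ) - θ₁ * (inner ℝ v₂ v₁ : ℝ) := by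
    rw [inner_sub_right, real_inner_smul_right]
  have h2 : (inner ℝ v₂ (w₁ - θ₁ • v₁) : ℝ) = (p:ℝ) * t₁ ^ 2 := by
    rw [hv2', real_inner_smul_left, real_inner_self_eq_norm_sq, ← ht₁]
  have hiw : (inner ℝ v₂ w₁ : ℝ) = (p:ℝ) * t₁ ^ 2 := by
    rw [hiv] at h1; linarith [h1, h2]
  have hinner2 : (inner ℝ v₂ w₂ : ℝ) = (b:ℝ) * ((p:ℝ) * t₁ ^ 2) := by
    rw [hw2, hav, hbw, inner_add_right, real_inner_smul_right, real_inner_smul_right,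
      hiv, hiw]; ring
  rw [hθ₂, hinner2, hnorm, div_eq_div_iff (by positivity) hpne]
  ring
end
end

section
/- Let m, n be positive integers with gcd(m, n) = 1, and let G_{m,n} be the presented group ⟨a, b ∣ b·a·b⁻¹ = a⁻¹, aᵐ·b²ⁿ = 1⟩. Then G_{m,n} is a finite group of order 4·m·n. -/
def prismRels (m n : ℕ) : Set (FreeGroup (Fin 2)) :=
  {FreeGroup.of 1 * FreeGroup.of 0 * (FreeGroup.of 1)⁻¹ * FreeGroup.of 0,
   FreeGroup.of 0 ^ m * FreeGroup.of 1 ^ (2 * n)}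

namespace PrismAux

variable (m n : ℕ)

abbrev PG := PresentedGroup (prismRels m n)

def pA : PG m n := PresentedGroup.of 0
def pB : PG m n := PresentedGroup.of 1

theorem mk_rel_eq_one {r : FreeGroup (Fin 2)} (hr : r ∈ prismRels m n) :
    PresentedGroup.mk (prismRels m n) r = 1 :=
  (QuotientGroup.eq_one_iff r).mpr (Subgroup.subset_normalClosure hr)

theorem rel1 : pB m n * pA m n * (pB m n)⁻¹ * pA m n = 1 := by
  have := mk_rel_eq_one m n (Or.inl rfl)
  simpa [pA, pB, PresentedGroup.of, map_mul, map_inv] using this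

theorem rel2 : pA m n ^ m * pB m n ^ (2 * n) = 1 := by
  have := mk_rel_eq_one m n (Or.inr rfl)
  simpa [pA, pB, PresentedGroup.of, map_mul, map_pow] using this

theorem conjBA : pB m n * pA m n * (pB m n)⁻¹ = (pA m n)⁻¹ :=
  eq_inv_of_mul_eq_one_left (rel1 m n)

theorem pow2n_B : pB m n ^ (2 * n) = (pA m n ^ m)⁻¹ :=
  eq_inv_of_mul_eq_one_right (rel2 m n)

theorem commute_B_Am : Commute (pB m n) (pA m n ^ m) := by
  have : pA m n ^ m = (pB m n ^ (2*n))⁻¹ := by rw [pow2n_B, inv_inv]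
  rw [this]
  exact ((Commute.refl (pB m n)).pow_right (2*n)).inv_right

theorem A_pow_2m : pA m n ^ (2 * m) = 1 := by
  have h1 : pB m n * pA m n ^ m * (pB m n)⁻¹ = (pA m n ^ m)⁻¹ := by
    rw [← conj_pow, conjBA m n, inv_pow]
  have h2 : pB m n * pA m n ^ m * (pB m n)⁻¹ = pA m n ^ m := by
    rw [(commute_B_Am m n).eq, mul_assoc, mul_inv_cancel, mul_one]
  have h3 : pA m n ^ m = (pA m n ^ m)⁻¹ := h2.symm.trans h1
  have h4 : pA m n ^ m * pA m n ^ m = 1 := mul_eq_one_iff_eq_inv.mpr h3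
  calc pA m n ^ (2*m) = pA m n ^ m * pA m n ^ m := by rw [← pow_add, two_mul]
  _ = 1 := h4


theorem B_pow_4n : pB m n ^ (4 * n) = 1 := by
  have : pB m n ^ (4 * n) = (pB m n ^ (2 * n)) ^ 2 := by
    rw [← pow_mul]; ring_nf
  rw [this, pow2n_B, inv_pow, ← pow_mul, mul_comm m 2, A_pow_2m, inv_one]

theorem pow2n_B' : pB m n ^ (2 * n) = pA m n ^ m := by
  rw [pow2n_B]
  exact inv_eq_of_mul_eq_one_left (by rw [← pow_add, ← two_mul, A_pow_2m])

theorem A_inv (hm : 0 < m) : (pA m n)⁻¹ = pA m n ^ (2 * m - 1) := by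
  apply inv_eq_of_mul_eq_one_right
  rw [← pow_succ', Nat.sub_add_cancel (by omega), A_pow_2m]

theorem B_inv (hn : 0 < n) : (pB m n)⁻¹ = pB m n ^ (4 * n - 1) := by
  apply inv_eq_of_mul_eq_one_right
  rw [← pow_succ', Nat.sub_add_cancel (by omega), B_pow_4n]

theorem B_mul_A_pow (hm : 0 < m) (i : ℕ) :
    pB m n * pA m n ^ i = pA m n ^ ((2 * m - 1) * i) * pB m n := by
  have h : pB m n * pA m n ^ i * (pB m n)⁻¹ = pA m n ^ ((2 * m - 1) * i) := by
    rw [← conj_pow, conjBA m n, A_inv m n hm, ← pow_mul]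
  calc pB m n * pA m n ^ i = pB m n * pA m n ^ i * (pB m n)⁻¹ * pB m n := by group
  _ = pA m n ^ ((2 * m - 1) * i) * pB m n := by rw [h]

theorem commute_B2_A : Commute (pB m n ^ 2) (pA m n) := by
  have hBA : pB m n * pA m n = (pA m n)⁻¹ * pB m n := by
    rw [← conjBA m n]; group
  have hBAinv : pB m n * (pA m n)⁻¹ = pA m n * pB m n := by
    have : pB m n * (pA m n)⁻¹ * (pB m n)⁻¹ = (pB m n * pA m n * (pB m n)⁻¹)⁻¹ := by group
    rw [conjBA m n, inv_inv] at this
    calc pB m n * (pA m n)⁻¹ = pB m n * (pA m n)⁻¹ * (pB m n)⁻¹ * pB m n := by group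
    _ = pA m n * pB m n := by rw [this]
  show pB m n ^ 2 * pA m n = pA m n * pB m n ^ 2
  calc pB m n ^ 2 * pA m n = pB m n * (pB m n * pA m n) := by rw [pow_two, mul_assoc]
  _ = pB m n * (pA m n)⁻¹ * pB m n := by rw [hBA, mul_assoc]
  _ = pA m n * pB m n ^ 2 := by rw [hBAinv, pow_two, mul_assoc]

theorem B_pow_odd_mul_A_pow (hm : 0 < m) (hn : 0 < n) (i : ℕ) :
    pB m n ^ (4 * n - 1) * pA m n ^ i
      = pA m n ^ ((2 * m - 1) * i) * pB m n ^ (4 * n - 1) := by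
  have h1 : pB m n ^ (4 * n - 1) = (pB m n ^ 2) ^ (2 * n - 1) * pB m n := by
    rw [← pow_mul, ← pow_succ]
    congr 1; omega
  have c := ((commute_B2_A m n).pow_pow (2 * n - 1) ((2 * m - 1) * i)).eq
  rw [h1, mul_assoc, B_mul_A_pow m n hm, ← mul_assoc, c, mul_assoc]

theorem A_pow_mod (i : ℕ) : pA m n ^ i = pA m n ^ (i % (2 * m)) := by
  conv_lhs => rw [← Nat.div_add_mod i (2 * m)]
  rw [pow_add, pow_mul, A_pow_2m, one_pow, one_mul]

/-- reduction to normal form -/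
theorem red (hm : 0 < m) (hn : 0 < n) (i j : ℕ) :
    ∃ i' j' : ℕ, i' < 2 * m ∧ j' < 2 * n ∧
      pA m n ^ i * pB m n ^ j = pA m n ^ i' * pB m n ^ j' := by
  refine ⟨(i + m * (j / (2 * n))) % (2 * m), j % (2 * n),
    Nat.mod_lt _ (by omega), Nat.mod_lt _ (by omega), ?_⟩
  conv_lhs => rw [← Nat.div_add_mod j (2 * n)]
  rw [pow_add (pB m n), pow_mul, pow2n_B', ← pow_mul, ← mul_assoc, ← pow_add,
    ← A_pow_mod]

def nf (p : Fin (2 * m) × Fin (2 * n)) : PG m n :=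
  pA m n ^ (p.1 : ℕ) * pB m n ^ (p.2 : ℕ)

theorem mem_range_nf (hm : 0 < m) (hn : 0 < n) (i j : ℕ) :
    pA m n ^ i * pB m n ^ j ∈ Set.range (nf m n) := by
  obtain ⟨i', j', hi, hj, heq⟩ := red m n hm hn i j
  exact ⟨(⟨i', hi⟩, ⟨j', hj⟩), heq.symm⟩

theorem nf_surj (hm : 0 < m) (hn : 0 < n) : Function.Surjective (nf m n) := by
  have key : ∀ z : FreeGroup (Fin 2), ∀ g ∈ Set.range (nf m n),
      PresentedGroup.mk (prismRels m n) z * g ∈ Set.range (nf m n) := by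
    intro z
    induction z using FreeGroup.induction_on with
    | C1 => intro g hg; simpa using hg
    | of x =>
      rintro g ⟨⟨i, j⟩, rfl⟩
      fin_cases x
      · -- a * (A^i B^j)
        show pA m n * _ ∈ _
        rw [nf, ← mul_assoc, ← pow_succ']
        exact mem_range_nf m n hm hn _ _
      · -- b * (A^i B^j)
        show pB m n * _ ∈ _
        rw [nf, ← mul_assoc, B_mul_A_pow m n hm, mul_assoc, ← pow_succ']
        exact mem_range_nf m n hm hn _ _
    | inv_of x _ =>
      rintro g ⟨⟨i, j⟩, rfl⟩
      fin_cases x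
      · show (pA m n)⁻¹ * _ ∈ _
        rw [nf, ← mul_assoc, A_inv m n hm, ← pow_add]
        exact mem_range_nf m n hm hn _ _
      · show (pB m n)⁻¹ * _ ∈ _
        rw [nf, ← mul_assoc, B_inv m n hn, B_pow_odd_mul_A_pow m n hm hn,
          mul_assoc, ← pow_add]
        exact mem_range_nf m n hm hn _ _
    | mul x y hx hy =>
      intro g hg
      rw [map_mul, mul_assoc]
      exact hx _ (hy g hg)
  intro g
  induction g using PresentedGroup.induction_on with
  | _ z =>
    have h1 : (1 : PG m n) ∈ Set.range (nf m n) := by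
      have := mem_range_nf m n hm hn 0 0
      simpa using this
    have := key z 1 h1
    simpa using this
section Homs

variable {K : Type} [Group K]

def liftF (A' B' : K) : Fin 2 → K := fun i => if i = 0 then A' else B'

theorem lift_rels (A' B' : K) (h1 : B' * A' * B'⁻¹ * A' = 1)
    (h2 : A' ^ m * B' ^ (2 * n) = 1) :
    ∀ r ∈ prismRels m n, FreeGroup.lift (liftF A' B') r = 1 := by
  intro r hr
  rcases hr with rfl | rfl
  · simpa [liftF] using h1
  · simpa [liftF] using h2

def toHom (A' B' : K) (h1 : B' * A' * B'⁻¹ * A' = 1)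
    (h2 : A' ^ m * B' ^ (2 * n) = 1) : PG m n →* K :=
  PresentedGroup.toGroup (lift_rels m n A' B' h1 h2)

theorem toHom_A (A' B' : K) (h1 : B' * A' * B'⁻¹ * A' = 1)
    (h2 : A' ^ m * B' ^ (2 * n) = 1) : toHom m n A' B' h1 h2 (pA m n) = A' := by
  show toHom m n A' B' h1 h2 (PresentedGroup.of 0) = A'
  rw [toHom, PresentedGroup.toGroup.of]
  simp [liftF]

theorem toHom_B (A' B' : K) (h1 : B' * A' * B'⁻¹ * A' = 1)
    (h2 : A' ^ m * B' ^ (2 * n) = 1) : toHom m n A' B' h1 h2 (pB m n) = B' := by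
  show toHom m n A' B' h1 h2 (PresentedGroup.of 1) = B'
  rw [toHom, PresentedGroup.toGroup.of]
  simp [liftF]

theorem toHom_word (A' B' : K) (h1 : B' * A' * B'⁻¹ * A' = 1)
    (h2 : A' ^ m * B' ^ (2 * n) = 1) (i j : ℕ) :
    toHom m n A' B' h1 h2 (pB m n ^ j * pA m n ^ i) = B' ^ j * A' ^ i := by
  rw [map_mul, map_pow, map_pow, toHom_A, toHom_B]

theorem card_dvd (A' B' : K) (h1 : B' * A' * B'⁻¹ * A' = 1)
    (h2 : A' ^ m * B' ^ (2 * n) = 1)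
    (hsurj : Function.Surjective (toHom m n A' B' h1 h2)) :
    Nat.card K ∣ Nat.card (PG m n) :=
  Subgroup.card_dvd_of_surjective _ hsurj

end Homs

open DihedralGroup in
theorem dihedral_dvd (hm : 0 < m) (hn : 0 < n) :
    2 * m ∣ Nat.card (PG m n) := by
  haveI : NeZero m := ⟨hm.ne'⟩
  have hinv : (sr (0 : ZMod m))⁻¹ = sr 0 := inv_eq_of_mul_eq_one_right (sr_mul_self 0)
  have h1 : sr (0 : ZMod m) * r 1 * (sr 0)⁻¹ * r 1 = 1 := by
    rw [hinv, sr_mul_r, sr_mul_sr, r_mul_r, one_def]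
    congr 1
    ring
  have h2 : (r (1 : ZMod m)) ^ m * (sr (0 : ZMod m)) ^ (2 * n) = 1 := by
    rw [r_one_pow, ZMod.natCast_self, pow_mul, sq, sr_mul_self, one_pow, mul_one, one_def]
  have hsurj : Function.Surjective (toHom m n _ _ h1 h2) := by
    rintro (i | i)
    · exact ⟨pB m n ^ 0 * pA m n ^ i.val, by
        rw [toHom_word, pow_zero, one_mul, r_one_pow, ZMod.natCast_val, ZMod.cast_id]⟩
    · exact ⟨pB m n ^ 1 * pA m n ^ i.val, by
        rw [toHom_word, pow_one, r_one_pow, sr_mul_r, zero_add, ZMod.natCast_val,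
          ZMod.cast_id]⟩
  have := card_dvd m n _ _ h1 h2 hsurj
  rwa [Nat.card_eq_fintype_card, DihedralGroup.card] at this

theorem zmod4n_dvd (hmodd : Odd m) (hn : 0 < n) :
    4 * n ∣ Nat.card (PG m n) := by
  haveI : NeZero (4 * n) := ⟨by omega⟩
  set B' : Multiplicative (ZMod (4 * n)) := Multiplicative.ofAdd 1 with hB'
  set A' : Multiplicative (ZMod (4 * n)) := B' ^ (2 * n) with hA'
  have hb : B' ^ (4 * n) = 1 := by
    rw [hB', ← ofAdd_nsmul, nsmul_eq_mul, mul_one, ZMod.natCast_self, ofAdd_zero]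
  have hA2 : A' * A' = 1 := by
    rw [hA', ← pow_add]
    have : 2 * n + 2 * n = 4 * n := by ring
    rw [this, hb]
  have h1 : B' * A' * B'⁻¹ * A' = 1 := by
    have hc : B' * A' * B'⁻¹ * A' = A' * A' := by
      rw [mul_comm B' A']; group
    rw [hc, hA2]
  have h2 : A' ^ m * B' ^ (2 * n) = 1 := by
    obtain ⟨t, ht⟩ := hmodd
    rw [hA', ← pow_mul, ← pow_add]
    have : 2 * n * m + 2 * n = 4 * n * (t + 1) := by subst ht; ring
    rw [this, pow_mul, hb, one_pow]
  have hsurj : Function.Surjective (toHom m n _ _ h1 h2) := by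
    intro k
    refine ⟨pB m n ^ (Multiplicative.toAdd k).val * pA m n ^ 0, ?_⟩
    rw [toHom_word, pow_zero, mul_one, hB', ← ofAdd_nsmul, nsmul_eq_mul, mul_one,
      ZMod.natCast_val, ZMod.cast_id]
    rfl
  have := card_dvd m n _ _ h1 h2 hsurj
  rwa [Nat.card_eq_fintype_card, Fintype.card_multiplicative, ZMod.card] at this

open QuaternionGroup in
theorem quaternion_dvd (hm : 0 < m) (hnodd : Odd n) :
    4 * m ∣ Nat.card (PG m n) := by
  haveI : NeZero m := ⟨hm.ne'⟩
  have hkey : (a 1 : QuaternionGroup m) * (xa 0 * a 1) = xa 0 := by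
    rw [xa_mul_a, a_mul_xa, zero_add, sub_self]
  have hswap : (xa 0 : QuaternionGroup m) * a 1 = (a 1)⁻¹ * xa 0 :=
    (inv_mul_eq_iff_eq_mul.mpr hkey.symm).symm
  have h1 : (xa 0 : QuaternionGroup m) * a 1 * (xa 0)⁻¹ * a 1 = 1 := by
    rw [hswap]; group
  have h2 : (a 1 : QuaternionGroup m) ^ m * (xa 0 : QuaternionGroup m) ^ (2 * n) = 1 := by
    obtain ⟨t, ht⟩ := hnodd
    have ha2m : (a 1 : QuaternionGroup m) ^ (2 * m) = 1 := a_one_pow_n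
    calc (a 1 : QuaternionGroup m) ^ m * (xa 0) ^ (2 * n)
        = (a 1) ^ m * ((xa 0) ^ 2) ^ n := by rw [← pow_mul]
      _ = (a 1) ^ m * ((a 1) ^ m) ^ n := by rw [xa_sq, a_one_pow]
      _ = (a 1) ^ (m + m * n) := by rw [← pow_mul, ← pow_add]
      _ = ((a 1) ^ (2 * m)) ^ (t + 1) := by
          rw [← pow_mul]; congr 1; subst ht; ring
      _ = 1 := by rw [ha2m, one_pow]
  have hsurj : Function.Surjective (toHom m n _ _ h1 h2) := by
    rintro (i | i)
    · exact ⟨pB m n ^ 0 * pA m n ^ i.val, by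
        rw [toHom_word, pow_zero, one_mul, a_one_pow, ZMod.natCast_val, ZMod.cast_id]⟩
    · exact ⟨pB m n ^ 1 * pA m n ^ i.val, by
        rw [toHom_word, pow_one, a_one_pow, xa_mul_a, zero_add, ZMod.natCast_val,
          ZMod.cast_id]⟩
  have := card_dvd m n _ _ h1 h2 hsurj
  rwa [Nat.card_eq_fintype_card, QuaternionGroup.card] at this

theorem zmod4n_dvd' (hn : 0 < n) (hnodd : Odd n) (hmeven : 2 ∣ m) :
    4 * n ∣ Nat.card (PG m n) := by
  haveI : NeZero n := ⟨hn.ne'⟩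
  set A' : Multiplicative (ZMod n × ZMod 2 × ZMod 2) := Multiplicative.ofAdd (0, 1, 0)
    with hA'
  set B' : Multiplicative (ZMod n × ZMod 2 × ZMod 2) := Multiplicative.ofAdd (1, 0, 1)
    with hB'
  have hA2 : A' * A' = 1 := by
    rw [hA', ← ofAdd_add]
    have : ((0, 1, 0) : ZMod n × ZMod 2 × ZMod 2) + (0, 1, 0) = 0 := by
      simp [Prod.ext_iff]
      decide
    rw [this, ofAdd_zero]
  have h1 : B' * A' * B'⁻¹ * A' = 1 := by
    have hc : B' * A' * B'⁻¹ * A' = A' * A' := by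
      rw [mul_comm B' A']; group
    rw [hc, hA2]
  have h2 : A' ^ m * B' ^ (2 * n) = 1 := by
    rw [hA', hB', ← ofAdd_nsmul, ← ofAdd_nsmul, ← ofAdd_add]
    have : m • ((0, 1, 0) : ZMod n × ZMod 2 × ZMod 2)
        + (2 * n) • ((1, 0, 1) : ZMod n × ZMod 2 × ZMod 2) = 0 := by
      simp only [Prod.smul_mk, Prod.mk_add_mk, smul_zero, nsmul_eq_mul, mul_one, zero_add,
        add_zero, Prod.mk_eq_zero]
      refine ⟨?_, ?_, ?_⟩
      · rw [ZMod.natCast_eq_zero_iff]; exact dvd_mul_left n 2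
      · rw [ZMod.natCast_eq_zero_iff]; exact hmeven
      · rw [ZMod.natCast_eq_zero_iff]; exact dvd_mul_right 2 n
    rw [this, ofAdd_zero]
  have hsurj : Function.Surjective (toHom m n _ _ h1 h2) := by
    intro k
    rcases hk : Multiplicative.toAdd k with ⟨x, y, z⟩
    have co : Nat.Coprime n 2 := Nat.coprime_two_right.mpr hnodd
    obtain ⟨s, hs1, hs2⟩ := Nat.chineseRemainder co x.val z.val
    refine ⟨pB m n ^ s * pA m n ^ y.val, ?_⟩
    rw [toHom_word, hB', hA', ← ofAdd_nsmul, ← ofAdd_nsmul, ← ofAdd_add]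
    have hx : ((s : ℕ) : ZMod n) = x := by
      have h1' : ((s : ℕ) : ZMod n) = ((x.val : ℕ) : ZMod n) :=
        (ZMod.natCast_eq_natCast_iff _ _ _).mpr hs1
      rw [h1', ZMod.natCast_val, ZMod.cast_id]
    have hz : ((s : ℕ) : ZMod 2) = z := by
      have h1' : ((s : ℕ) : ZMod 2) = ((z.val : ℕ) : ZMod 2) :=
        (ZMod.natCast_eq_natCast_iff _ _ _).mpr hs2
      rw [h1', ZMod.natCast_val, ZMod.cast_id]
    have hy : ((y.val : ℕ) : ZMod 2) = y := by rw [ZMod.natCast_val, ZMod.cast_id]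
    have : (s : ℕ) • ((1, 0, 1) : ZMod n × ZMod 2 × ZMod 2) + y.val • (0, 1, 0)
        = (x, y, z) := by
      simp only [Prod.smul_mk, Prod.mk_add_mk, smul_zero, nsmul_eq_mul, mul_one, zero_add,
        add_zero]
      rw [hx, hy, hz]
    rw [this, ← hk]; rfl
  have := card_dvd m n _ _ h1 h2 hsurj
  have hcard : Fintype.card (ZMod n × ZMod 2 × ZMod 2) = 4 * n := by
    rw [Fintype.card_prod, Fintype.card_prod, ZMod.card, ZMod.card]; ring
  rwa [Nat.card_eq_fintype_card, Fintype.card_multiplicative, hcard] at this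

theorem finite_PG (hm : 0 < m) (hn : 0 < n) : Finite (PG m n) :=
  Finite.of_surjective (nf m n) (nf_surj m n hm hn)

theorem card_le (hm : 0 < m) (hn : 0 < n) : Nat.card (PG m n) ≤ 4 * m * n := by
  have h := Nat.card_le_card_of_surjective (nf m n) (nf_surj m n hm hn)
  have : Nat.card (Fin (2 * m) × Fin (2 * n)) = 4 * m * n := by
    rw [Nat.card_eq_fintype_card, Fintype.card_prod, Fintype.card_fin, Fintype.card_fin]
    ring
  rwa [this] at h

theorem main (hm : 0 < m) (hn : 0 < n) (hmn : Nat.Coprime m n) :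
    Finite (PG m n) ∧ Nat.card (PG m n) = 4 * m * n := by
  have hfin : Finite (PG m n) := finite_PG m n hm hn
  refine ⟨hfin, ?_⟩
  have hle : Nat.card (PG m n) ≤ 4 * m * n := card_le m n hm hn
  have hpos : 0 < Nat.card (PG m n) := Nat.card_pos
  have hdvd : 4 * m * n ∣ Nat.card (PG m n) := by
    rcases Nat.even_or_odd m with hme | hmo
    · have hnodd : Odd n := by
        rcases Nat.even_or_odd n with hne | h
        · exfalso
          have h2 : (2 : ℕ) ∣ Nat.gcd m n := Nat.dvd_gcd hme.two_dvd hne.two_dvd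
          rw [hmn] at h2
          omega
        · exact h
      have d1 := quaternion_dvd m n hm hnodd
      have d2 := zmod4n_dvd' m n hn hnodd hme.two_dvd
      have h3 := Nat.lcm_dvd d1 d2
      rwa [Nat.lcm_mul_left, hmn.lcm_eq_mul, ← mul_assoc] at h3
    · have d1 := dihedral_dvd m n hm hn
      have d2 := zmod4n_dvd m n hmo hn
      have h3 := Nat.lcm_dvd d1 d2
      have hco : Nat.Coprime m (2 * n) :=
        Nat.Coprime.mul_right (Nat.coprime_two_right.mpr hmo) hmn
      have hl : Nat.lcm (2 * m) (4 * n) = 4 * m * n := by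
        have h4 : (4 : ℕ) * n = 2 * (2 * n) := by ring
        rw [h4, Nat.lcm_mul_left, hco.lcm_eq_mul]
        ring
      rwa [hl] at h3
  exact le_antisymm hle (Nat.le_of_dvd hpos hdvd)

end PrismAux

/-- for coprime positive integers `m, n`, the group
`G_{m,n} = ⟨a, b ∣ b·a·b⁻¹ = a⁻¹, aᵐ·b²ⁿ = 1⟩` is finite of order `4·m·n`. -/
theorem prismGroup_card (m n : ℕ) (hm : 0 < m) (hn : 0 < n) (hmn : Nat.Coprime m n) :
    Finite (PresentedGroup (prismRels m n)) ∧
      Nat.card (PresentedGroup (prismRels m n)) = 4 * m * n := by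
  exact PrismAux.main m n hm hn hmn
end

section
/- Let m, n be positive integers with gcd(m, n) = 1, and let G_{m,n} be the presented group ⟨a, b ∣ b·a·b⁻¹ = a⁻¹, aᵐ·b²ⁿ = 1⟩. Then G_{m,n} is abelian (commutative) if and only if m = 1. -/
/-- The map to the dihedral group `D_m`, sending `a ↦ r 1`, `b ↦ sr 0`. -/
lemma prism_dihedral_rels (m n : ℕ) :
    ∀ r ∈ prismRels m n,
      FreeGroup.lift (![DihedralGroup.r 1, DihedralGroup.sr 0] : Fin 2 → DihedralGroup m) r = 1 := by
  intro r hr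
  rcases hr with h | h <;> subst h <;>
    simp only [map_mul, map_inv, map_pow, FreeGroup.lift_apply_of,
      Matrix.cons_val_zero, Matrix.cons_val_one, Matrix.head_cons]
  · have hinv : (DihedralGroup.sr 0 : DihedralGroup m)⁻¹ = DihedralGroup.sr 0 := rfl
    rw [hinv]
    simp [DihedralGroup.sr_mul_r, DihedralGroup.sr_mul_sr, DihedralGroup.r_mul_r]
  · rw [pow_mul]
    have h2 : (DihedralGroup.sr 0 : DihedralGroup m) ^ 2 = 1 := by
      rw [sq]; exact DihedralGroup.sr_mul_self 0
    rw [h2, one_pow, mul_one, DihedralGroup.r_one_pow]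
    simp

/-- The map to the quaternion group `Q₈`, for `m = 2`, `n` odd: `a ↦ a 1`, `b ↦ xa 0`. -/
lemma prism_quaternion_rels (n : ℕ) (hodd : Odd n) :
    ∀ r ∈ prismRels 2 n,
      FreeGroup.lift (![QuaternionGroup.a 1, QuaternionGroup.xa 0] : Fin 2 → QuaternionGroup 2)
        r = 1 := by
  intro r hr
  rcases hr with h | h <;> subst h <;>
    simp only [map_mul, map_inv, map_pow, FreeGroup.lift_apply_of,
      Matrix.cons_val_zero, Matrix.cons_val_one, Matrix.head_cons]
  · have hinv : (QuaternionGroup.xa 0 : QuaternionGroup 2)⁻¹ = QuaternionGroup.xa (2 + 0) := rfl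
    rw [hinv]
    rw [QuaternionGroup.xa_mul_a, QuaternionGroup.xa_mul_xa, QuaternionGroup.a_mul_a]
    rw [QuaternionGroup.one_def]
    congr 1
  · have hx2 : (QuaternionGroup.xa 0 : QuaternionGroup 2) ^ 2 = QuaternionGroup.a 2 := by
      rw [sq, QuaternionGroup.xa_mul_xa]; norm_num
    rw [pow_mul, hx2, sq, QuaternionGroup.a_mul_a]
    have ha4 : ∀ j : ℕ, (QuaternionGroup.a 2 : QuaternionGroup 2) ^ j
        = QuaternionGroup.a (2 * (j : ZMod 4)) := by
      intro j
      induction j with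
      | zero => simp
      | succ j ih =>
        rw [pow_succ, ih, QuaternionGroup.a_mul_a]
        push_cast
        ring_nf
    rw [ha4, QuaternionGroup.a_mul_a, QuaternionGroup.one_def]
    congr 1
    obtain ⟨k, hk⟩ := hodd
    subst hk
    push_cast
    have h1 : ((k : ZMod 4) * 4 = 0) := by
      have h4 : ((4 : ℕ) : ZMod 4) = 0 := by decide
      calc (k : ZMod 4) * 4 = (k : ZMod 4) * ((4:ℕ) : ZMod 4) := by norm_cast
        _ = 0 := by rw [h4, mul_zero]
    have h4 : (4 : ZMod 4) = 0 := by decide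
    linear_combination h1 + h4

/-- for coprime positive integers `m, n`, the group
`G_{m,n} = ⟨a, b ∣ b·a·b⁻¹ = a⁻¹, aᵐ·b²ⁿ = 1⟩` is abelian if and only if `m = 1`. -/
theorem prismGroup_comm_iff (m n : ℕ) (hm : 0 < m) (hn : 0 < n) (hmn : Nat.Coprime m n) :
    (∀ x y : PresentedGroup (prismRels m n), x * y = y * x) ↔ m = 1 := by
  constructor
  · intro hcomm
    -- First, via the dihedral group, `m ∣ 2`.
    have hdvd : m ∣ 2 := by
      set φ := PresentedGroup.toGroup (prism_dihedral_rels m n) with hφ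
      have key : φ (PresentedGroup.of 0 * PresentedGroup.of 1)
          = φ (PresentedGroup.of 1 * PresentedGroup.of 0) := by
        rw [hcomm]
      simp only [map_mul, PresentedGroup.toGroup.of, hφ,
        Matrix.cons_val_zero, Matrix.cons_val_one, Matrix.head_cons] at key
      rw [DihedralGroup.r_mul_sr, DihedralGroup.sr_mul_r] at key
      have h1 : (0 - 1 : ZMod m) = 0 + 1 := by
        injection key
      have h2 : ((2 : ℕ) : ZMod m) = 0 := by
        push_cast
        linear_combination -h1
      exact (ZMod.natCast_eq_zero_iff 2 m).mp h2
    have hle : m ≤ 2 := Nat.le_of_dvd (by norm_num) hdvd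
    interval_cases m
    · rfl
    · -- `m = 2`: contradiction via the quaternion group, using that `n` is odd.
      exfalso
      have hodd : Odd n := hmn.odd_of_left
      set φ := PresentedGroup.toGroup (prism_quaternion_rels n hodd) with hφ
      have key : φ (PresentedGroup.of 0 * PresentedGroup.of 1)
          = φ (PresentedGroup.of 1 * PresentedGroup.of 0) := by
        rw [hcomm]
      simp only [map_mul, PresentedGroup.toGroup.of, hφ,
        Matrix.cons_val_zero, Matrix.cons_val_one, Matrix.head_cons] at key
      rw [QuaternionGroup.a_mul_xa, QuaternionGroup.xa_mul_a] at key
      have h1 : (0 - 1 : ZMod 4) = 0 + 1 := by injection key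
      revert h1
      decide
  · -- `m = 1`: the group is cyclic, generated by `b`.
    rintro rfl
    have hrel : (PresentedGroup.mk (prismRels 1 n)
        (FreeGroup.of 0 ^ 1 * FreeGroup.of 1 ^ (2 * n))) = 1 := by
      apply (QuotientGroup.eq_one_iff _).mpr
      exact Subgroup.subset_normalClosure (Set.mem_insert_iff.mpr (Or.inr rfl))
    simp only [map_mul, map_pow, pow_one] at hrel
    have ha : (PresentedGroup.of 0 : PresentedGroup (prismRels 1 n))
        ∈ Subgroup.zpowers (PresentedGroup.of 1) := by
      have : (PresentedGroup.of 0 : PresentedGroup (prismRels 1 n))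
          = ((PresentedGroup.of 1 : PresentedGroup (prismRels 1 n)) ^ (2 * n))⁻¹ := by
        rw [eq_inv_iff_mul_eq_one]
        exact hrel
      rw [this]
      exact Subgroup.inv_mem _ (Subgroup.npow_mem_zpowers _ _)
    have hall : ∀ x : PresentedGroup (prismRels 1 n),
        x ∈ Subgroup.zpowers (PresentedGroup.of 1) := by
      intro x
      apply PresentedGroup.generated_by
      intro j
      fin_cases j
      · exact ha
      · exact Subgroup.mem_zpowers _
    intro x y
    obtain ⟨i, hi⟩ := Subgroup.mem_zpowers_iff.mp (hall x)
    obtain ⟨j, hj⟩ := Subgroup.mem_zpowers_iff.mp (hall y)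
    rw [← hi, ← hj, ← zpow_add, ← zpow_add, add_comm]
end

section
/- Let m, n and m', n' be positive integers with gcd(m, n) = 1 and gcd(m', n') = 1, and let G_{m,n} and G_{m',n'} be the presented groups ⟨a, b ∣ b·a·b⁻¹ = a⁻¹, aᵐ·b²ⁿ = 1⟩ and ⟨a, b ∣ b·a·b⁻¹ = a⁻¹, a^{m'}·b^{2n'} = 1⟩. If G_{m,n} is isomorphic to G_{m',n'}, then m = m' and n = n'. In other words, the fundamental group of a prism manifold determines and is determined by the ordered pair (m, n). -/
section Span

variable {G : Type*} [Group G] {A B : G} {M N K : ℕ}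

lemma span_inv_A (hM : 0 < M) (hA : A ^ (2 * M) = 1) : A⁻¹ = A ^ (2 * M - 1) := by
  apply inv_eq_of_mul_eq_one_right
  rw [← pow_succ']
  have h1 : 2 * M - 1 + 1 = 2 * M := by omega
  rw [h1, hA]

lemma span_B_pow_A (hM : 0 < M) (hBA : B * A = A⁻¹ * B) (hA : A ^ (2 * M) = 1) :
    ∀ t : ℕ, B * A ^ t = A ^ ((2 * M - 1) * t) * B := by
  intro t
  induction t with
  | zero => simp
  | succ t ih =>
    rw [pow_succ, ← mul_assoc, ih, mul_assoc, hBA, span_inv_A hM hA, ← mul_assoc,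
      ← pow_add, Nat.mul_succ]

lemma span_Bpow_Apow (hM : 0 < M) (hBA : B * A = A⁻¹ * B) (hA : A ^ (2 * M) = 1) :
    ∀ y t : ℕ, B ^ y * A ^ t = A ^ ((2 * M - 1) ^ y * t) * B ^ y := by
  intro y
  induction y with
  | zero => simp
  | succ y ih =>
    intro t
    rw [pow_succ, mul_assoc, span_B_pow_A hM hBA hA, ← mul_assoc, ih, mul_assoc, ← pow_succ]
    have h2 : (2 * M - 1) ^ y * ((2 * M - 1) * t) = (2 * M - 1) ^ (y + 1) * t := by ring
    rw [h2]

lemma span_Bpow_A (hM : 0 < M) (hBA : B * A = A⁻¹ * B) (hA : A ^ (2 * M) = 1)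
    (y : ℕ) : B ^ y * A = A ^ ((2 * M - 1) ^ y) * B ^ y := by
  have := span_Bpow_Apow hM hBA hA y 1
  rwa [pow_one, mul_one] at this

lemma span_mem (hM : 0 < M) (hN : 0 < N)
    (hBA : B * A = A⁻¹ * B) (hA : A ^ (2 * M) = 1) (hB : B ^ (2 * N) = A ^ K) :
    ∀ g ∈ Subgroup.closure {A, B}, ∃ x y : ℕ, g = A ^ x * B ^ y := by
  have hinvB : B⁻¹ = A ^ ((2 * M - 1) * K) * B ^ (2 * N - 1) := by
    apply inv_eq_of_mul_eq_one_left
    rw [mul_assoc, ← pow_succ]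
    have h1 : 2 * N - 1 + 1 = 2 * N := by omega
    rw [h1, hB, ← pow_add]
    have h2 : (2 * M - 1) * K + K = (2 * M) * K := by
      have h3 : 2 * M - 1 + 1 = 2 * M := by omega
      calc (2 * M - 1) * K + K = (2 * M - 1 + 1) * K := by ring
        _ = 2 * M * K := by rw [h3]
    rw [h2, pow_mul, hA, one_pow]
  intro g hg
  induction hg using Subgroup.closure_induction_right with
  | one => exact ⟨0, 0, by simp⟩
  | mul_right g hg s hs ih =>
    obtain ⟨x, y, rfl⟩ := ih
    rcases hs with rfl | rfl
    · refine ⟨x + (2 * M - 1) ^ y, y, ?_⟩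
      rw [mul_assoc, span_Bpow_A hM hBA hA, ← mul_assoc, ← pow_add]
    · exact ⟨x, y + 1, by rw [mul_assoc, ← pow_succ]⟩
  | mul_inv_cancel g hg s hs ih =>
    obtain ⟨x, y, rfl⟩ := ih
    rcases hs with rfl | rfl
    · refine ⟨x + (2 * M - 1) ^ y * (2 * M - 1), y, ?_⟩
      rw [span_inv_A hM hA, mul_assoc, span_Bpow_Apow hM hBA hA, ← mul_assoc, ← pow_add]
    · refine ⟨x + (2 * M - 1) ^ y * ((2 * M - 1) * K), y + (2 * N - 1), ?_⟩
      rw [hinvB, ← mul_assoc, mul_assoc (A ^ x), span_Bpow_Apow hM hBA hA, ← mul_assoc,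
        ← pow_add, mul_assoc, ← pow_add]

lemma span_surj (hM : 0 < M) (hN : 0 < N)
    (hBA : B * A = A⁻¹ * B) (hA : A ^ (2 * M) = 1) (hB : B ^ (2 * N) = A ^ K)
    (htop : Subgroup.closure ({A, B} : Set G) = ⊤) :
    Function.Surjective (fun p : Fin (2 * M) × Fin (2 * N) => A ^ (p.1 : ℕ) * B ^ (p.2 : ℕ)) := by
  intro g
  obtain ⟨x, y, rfl⟩ := span_mem hM hN hBA hA hB g (htop ▸ Subgroup.mem_top g)
  have h2M : 0 < 2 * M := by omega
  have h2N : 0 < 2 * N := by omega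
  refine ⟨(⟨(x + K * (y / (2 * N))) % (2 * M), Nat.mod_lt _ h2M⟩,
          ⟨y % (2 * N), Nat.mod_lt _ h2N⟩), ?_⟩
  have hy : B ^ y = A ^ (K * (y / (2 * N))) * B ^ (y % (2 * N)) := by
    conv_lhs => rw [← Nat.div_add_mod y (2 * N)]
    rw [pow_add, pow_mul, hB, ← pow_mul]
  simp only
  rw [← pow_eq_pow_mod _ hA, hy, ← mul_assoc, ← pow_add]

lemma span_card (hM : 0 < M) (hN : 0 < N)
    (hBA : B * A = A⁻¹ * B) (hA : A ^ (2 * M) = 1) (hB : B ^ (2 * N) = A ^ K)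
    (htop : Subgroup.closure ({A, B} : Set G) = ⊤) :
    Nat.card G ≤ 4 * (M * N) ∧ Finite G := by
  have hs := span_surj hM hN hBA hA hB htop
  have hfin : Finite G := Finite.of_surjective _ hs
  refine ⟨?_, hfin⟩
  calc Nat.card G ≤ Nat.card (Fin (2 * M) × Fin (2 * N)) :=
        Nat.card_le_card_of_surjective _ hs
    _ = 4 * (M * N) := by simp [Nat.card_eq_fintype_card]; ring

end Span


section PG
variable {α : Type*} {rels : Set (FreeGroup α)}

lemma pg_rel_one {r : FreeGroup α} (hr : r ∈ rels) : PresentedGroup.mk rels r = 1 :=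
  (QuotientGroup.eq_one_iff _).mpr (Subgroup.subset_normalClosure hr)

end PG

section Prism
variable {m n : ℕ}

local notation "G" => PresentedGroup (prismRels m n)

noncomputable abbrev pA : PresentedGroup (prismRels m n) := PresentedGroup.of 0
noncomputable abbrev pB : PresentedGroup (prismRels m n) := PresentedGroup.of 1

lemma prism_rel1 : (pB * pA * pB⁻¹ * pA : G) = 1 := by
  have := pg_rel_one (rels := prismRels m n)
    (r := FreeGroup.of 1 * FreeGroup.of 0 * (FreeGroup.of 1)⁻¹ * FreeGroup.of 0)
    (Set.mem_insert _ _)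
  simpa [pA, pB, PresentedGroup.of, map_mul, map_inv] using this

lemma prism_rel2 : (pA ^ m * pB ^ (2 * n) : G) = 1 := by
  have := pg_rel_one (rels := prismRels m n)
    (r := FreeGroup.of 0 ^ m * FreeGroup.of 1 ^ (2 * n))
    (Set.mem_insert_of_mem _ rfl)
  simpa [pA, pB, PresentedGroup.of, map_mul, map_pow] using this

lemma prism_hBA : (pB * pA : G) = pA⁻¹ * pB := by
  have h := prism_rel1 (m := m) (n := n)
  have : (pB * pA * pB⁻¹ : G) = pA⁻¹ := by
    have := mul_eq_one_iff_eq_inv.mp h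
    rw [this]
  calc (pB * pA : G) = (pB * pA * pB⁻¹) * pB := by group
    _ = pA⁻¹ * pB := by rw [this]

lemma prism_conj_pow (t : ℕ) : (pB * pA ^ t * pB⁻¹ : G) = (pA ^ t)⁻¹ := by
  have h : (pB * pA * pB⁻¹ : G) = pA⁻¹ := by
    have := mul_eq_one_iff_eq_inv.mp (prism_rel1 (m := m) (n := n))
    rw [this]
  calc (pB * pA ^ t * pB⁻¹ : G) = (pB * pA * pB⁻¹) ^ t := by rw [conj_pow]
    _ = (pA⁻¹) ^ t := by rw [h]
    _ = (pA ^ t)⁻¹ := by rw [inv_pow]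

lemma prism_Am_comm_B : (pA ^ m * pB : G) = pB * pA ^ m := by
  have h2 := prism_rel2 (m := m) (n := n)
  have hAm : (pA ^ m : G) = (pB ^ (2 * n))⁻¹ := mul_eq_one_iff_eq_inv.mp h2
  rw [hAm]
  group

lemma prism_Am_inv : (pA ^ m : G) = (pA ^ m)⁻¹ := by
  have h := prism_conj_pow (m := m) (n := n) m
  have hcm : Commute (pA ^ m : G) pB := prism_Am_comm_B
  have key : (pB * pA ^ m * pB⁻¹ : G) = pA ^ m := by
    rw [mul_assoc, hcm.inv_right.eq, ← mul_assoc, mul_inv_cancel, one_mul]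
  calc (pA ^ m : G) = pB * pA ^ m * pB⁻¹ := key.symm
    _ = (pA ^ m)⁻¹ := h

lemma prism_hA : (pA ^ (2 * m) : G) = 1 := by
  rw [two_mul, pow_add]
  nth_rewrite 1 [prism_Am_inv]
  rw [inv_mul_cancel]

lemma prism_hB : (pB ^ (2 * n) : G) = pA ^ m := by
  have h2 := prism_rel2 (m := m) (n := n)
  rw [prism_Am_inv]
  exact eq_inv_of_mul_eq_one_right h2

lemma prism_htop : Subgroup.closure ({pA, pB} : Set G) = ⊤ := by
  rw [← PresentedGroup.closure_range_of (prismRels m n)]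
  congr 1
  ext x
  constructor
  · rintro (rfl | rfl)
    exacts [⟨0, rfl⟩, ⟨1, rfl⟩]
  · rintro ⟨i, rfl⟩
    fin_cases i
    · exact Or.inl rfl
    · exact Or.inr rfl

end Prism


section Homs
variable {m n : ℕ}

lemma prism_toGroup {H : Type*} [Group H] (α β : H)
    (h1 : β * α * β⁻¹ * α = 1) (h2 : α ^ m * β ^ (2 * n) = 1) :
    ∃ φ : PresentedGroup (prismRels m n) →* H,
      φ (PresentedGroup.of 0) = α ∧ φ (PresentedGroup.of 1) = β := by
  set f : Fin 2 → H := fun i => if i = 0 then α else β with hf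
  have hrels : ∀ r ∈ prismRels m n, FreeGroup.lift f r = 1 := by
    rintro r (rfl | rfl)
    · simpa [hf, map_mul, map_inv] using h1
    · simpa [hf, map_mul, map_pow] using h2
  exact ⟨PresentedGroup.toGroup hrels, by simp [hf], by simp [hf]⟩

lemma comm_rel1_aux {H : Type*} [CommGroup H] (α β : H) :
    β * α * β⁻¹ * α = α ^ 2 := by
  rw [mul_right_comm β α β⁻¹, mul_inv_cancel, one_mul, sq]

open QuaternionGroup in
lemma prism_dvd_quaternion (hm : 0 < m) (hodd : Odd n) :
    4 * m ∣ Nat.card (PresentedGroup (prismRels m n)) := by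
  haveI : NeZero m := ⟨hm.ne'⟩
  set α : QuaternionGroup m := a 1 with hα
  set β : QuaternionGroup m := xa 0 with hβ
  have hβinv : β⁻¹ = xa (-(m : ZMod (2 * m))) := by
    apply inv_eq_of_mul_eq_one_right
    rw [hβ, xa_mul_xa, one_def]
    congr 1
    ring
  have h1 : β * α * β⁻¹ * α = 1 := by
    rw [hα, hβ, hβinv, xa_mul_a, xa_mul_xa, a_mul_a, one_def]
    congr 1
    ring
  have h2 : α ^ m * β ^ (2 * n) = 1 := by
    obtain ⟨t, ht⟩ := hodd
    rw [hα, hβ, pow_mul, sq, xa_mul_xa]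
    have : (m : ZMod (2 * m)) + 0 - 0 = ((m : ℕ) : ZMod (2 * m)) := by ring
    rw [this, ← a_one_pow, ← pow_mul, ← pow_add]
    have hexp : m + m * n = 2 * m * (t + 1) := by subst ht; ring
    rw [hexp, pow_mul, a_one_pow_n, one_pow]
  obtain ⟨φ, hφA, hφB⟩ := prism_toGroup α β h1 h2
  have hsurj : Function.Surjective φ := by
    intro x
    haveI : NeZero (2 * m) := ⟨by omega⟩
    cases x with
    | a i =>
      refine ⟨PresentedGroup.of 0 ^ i.val, ?_⟩
      rw [map_pow, hφA, hα, a_one_pow, ZMod.natCast_rightInverse i]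
    | xa i =>
      refine ⟨PresentedGroup.of 1 * PresentedGroup.of 0 ^ i.val, ?_⟩
      rw [map_mul, map_pow, hφA, hφB, hα, hβ, a_one_pow, ZMod.natCast_rightInverse i,
        xa_mul_a, zero_add]
  have := Subgroup.card_dvd_of_surjective φ hsurj
  rwa [Nat.card_eq_fintype_card, QuaternionGroup.card] at this

open DihedralGroup in
lemma prism_dvd_dihedral (hm : 0 < m) :
    2 * m ∣ Nat.card (PresentedGroup (prismRels m n)) := by
  haveI : NeZero m := ⟨hm.ne'⟩
  set α : DihedralGroup m := r 1 with hα
  set β : DihedralGroup m := sr 0 with hβ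
  have hβinv : β⁻¹ = β := inv_eq_of_mul_eq_one_right (sr_mul_self 0)
  have h1 : β * α * β⁻¹ * α = 1 := by
    rw [hα, hβ, hβinv, sr_mul_r, sr_mul_sr, r_mul_r, one_def]
    congr 1
    ring
  have h2 : α ^ m * β ^ (2 * n) = 1 := by
    rw [hα, hβ, r_one_pow, pow_mul, sq, sr_mul_self, one_pow, mul_one,
      ZMod.natCast_self, ← one_def]
  obtain ⟨φ, hφA, hφB⟩ := prism_toGroup α β h1 h2
  have hsurj : Function.Surjective φ := by
    intro x
    cases x with
    | r i =>
      refine ⟨PresentedGroup.of 0 ^ i.val, ?_⟩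
      rw [map_pow, hφA, hα, r_one_pow, ZMod.natCast_rightInverse i]
    | sr i =>
      refine ⟨PresentedGroup.of 1 * PresentedGroup.of 0 ^ i.val, ?_⟩
      rw [map_mul, map_pow, hφA, hφB, hα, hβ, r_one_pow, ZMod.natCast_rightInverse i,
        sr_mul_r, zero_add]
  have := Subgroup.card_dvd_of_surjective φ hsurj
  rwa [DihedralGroup.nat_card] at this

end Homs


section Ab
variable {m n : ℕ}

lemma prism_toGroup' {H : Type*} [Group H] (α β : H)
    (h1 : β * α * β⁻¹ * α = 1) (h2 : α ^ m * β ^ (2 * n) = 1) :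
    ∃ φ : PresentedGroup (prismRels m n) →* H,
      φ (PresentedGroup.of 0) = α ∧ φ (PresentedGroup.of 1) = β := by
  set f : Fin 2 → H := fun i => if i = 0 then α else β with hf
  have hrels : ∀ r ∈ prismRels m n, FreeGroup.lift f r = 1 := by
    rintro r (rfl | rfl)
    · simpa [hf, map_mul, map_inv] using h1
    · simpa [hf, map_mul, map_pow] using h2
  exact ⟨PresentedGroup.toGroup hrels, by simp [hf], by simp [hf]⟩

/-- For odd `m`: a surjective hom onto `ℤ/4n`. -/
lemma prism_ab_surj_odd (hn : 0 < n) (hmodd : Odd m) :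
    ∃ φ : PresentedGroup (prismRels m n) →* Multiplicative (ZMod (4 * n)),
      Function.Surjective φ := by
  haveI : NeZero (4 * n) := ⟨by omega⟩
  set α : Multiplicative (ZMod (4 * n)) := Multiplicative.ofAdd ((2 * n : ℕ) : ZMod (4 * n))
    with hα
  set β : Multiplicative (ZMod (4 * n)) := Multiplicative.ofAdd 1 with hβ
  have h1 : β * α * β⁻¹ * α = 1 := by
    rw [mul_right_comm β α β⁻¹, mul_inv_cancel, one_mul, hα, ← ofAdd_add, ofAdd_eq_one,
      ← Nat.cast_add]
    have : 2 * n + 2 * n = 4 * n := by ring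
    rw [this, ZMod.natCast_self]
  have h2 : α ^ m * β ^ (2 * n) = 1 := by
    obtain ⟨t, ht⟩ := hmodd
    rw [hα, hβ, ← ofAdd_nsmul, ← ofAdd_nsmul, ← ofAdd_add, ofAdd_eq_one]
    rw [show (m • ((2 * n : ℕ) : ZMod (4 * n)) + (2 * n) • (1 : ZMod (4 * n)))
        = ((m * (2 * n) + 2 * n : ℕ) : ZMod (4 * n)) by push_cast; ring]
    rw [show m * (2 * n) + 2 * n = 4 * n * (t + 1) by subst ht; ring,
      Nat.cast_mul, ZMod.natCast_self, zero_mul]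
  obtain ⟨φ, hφA, hφB⟩ := prism_toGroup' α β h1 h2
  refine ⟨φ, fun z => ⟨PresentedGroup.of 1 ^ (z.toAdd.val), ?_⟩⟩
  rw [map_pow, hφB, hβ, ← ofAdd_nsmul, nsmul_eq_mul, mul_one, ZMod.natCast_rightInverse,
    ofAdd_toAdd]

/-- For even `m`: a surjective hom onto `ℤ/2 × ℤ/2n`. -/
lemma prism_ab_surj_even (_hn : 0 < n) (hmeven : Even m) :
    ∃ φ : PresentedGroup (prismRels m n) →* Multiplicative (ZMod 2 × ZMod (2 * n)),
      Function.Surjective φ := by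
  haveI : NeZero (2 * n) := ⟨by omega⟩
  set α : Multiplicative (ZMod 2 × ZMod (2 * n)) := Multiplicative.ofAdd (1, 0) with hα
  set β : Multiplicative (ZMod 2 × ZMod (2 * n)) := Multiplicative.ofAdd (0, 1) with hβ
  have h1 : β * α * β⁻¹ * α = 1 := by
    rw [mul_right_comm β α β⁻¹, mul_inv_cancel, one_mul, hα, ← ofAdd_add, ofAdd_eq_one,
      Prod.mk_add_mk, add_zero]
    constructor
  have h2 : α ^ m * β ^ (2 * n) = 1 := by
    obtain ⟨t, ht⟩ := hmeven
    rw [hα, hβ, ← ofAdd_nsmul, ← ofAdd_nsmul, ← ofAdd_add, ofAdd_eq_one, Prod.smul_mk,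
      Prod.smul_mk, Prod.mk_add_mk, Prod.mk_eq_zero]
    refine ⟨?_, ?_⟩
    · rw [smul_zero, add_zero, nsmul_eq_mul, mul_one]
      have h2m : (2 : ℕ) ∣ m := ⟨t, by omega⟩
      exact (ZMod.natCast_eq_zero_iff m 2).mpr h2m
    · rw [smul_zero, zero_add, nsmul_eq_mul, mul_one, ZMod.natCast_self]
  obtain ⟨φ, hφA, hφB⟩ := prism_toGroup' α β h1 h2
  refine ⟨φ, fun z => ⟨PresentedGroup.of 0 ^ (z.toAdd.1.val) *
    PresentedGroup.of 1 ^ (z.toAdd.2.val), ?_⟩⟩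
  rw [map_mul, map_pow, map_pow, hφA, hφB, hα, hβ, ← ofAdd_nsmul, ← ofAdd_nsmul, ← ofAdd_add,
    Prod.smul_mk, Prod.smul_mk, Prod.mk_add_mk]
  rw [smul_zero, smul_zero, nsmul_eq_mul, nsmul_eq_mul, mul_one, mul_one, add_zero, zero_add,
    ZMod.natCast_rightInverse, ZMod.natCast_rightInverse, ofAdd_toAdd]

end Ab

section Main
variable {m n : ℕ}

lemma prism_span_card (hm : 0 < m) (hn : 0 < n) :
    Nat.card (PresentedGroup (prismRels m n)) ≤ 4 * (m * n) ∧
      Finite (PresentedGroup (prismRels m n)) :=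
  span_card hm hn prism_hBA prism_hA prism_hB prism_htop

lemma prism_of_ab_surjective :
    Function.Surjective
      (Abelianization.of : PresentedGroup (prismRels m n) →
        Abelianization (PresentedGroup (prismRels m n))) :=
  fun x => QuotientGroup.induction_on x fun g => ⟨g, rfl⟩

lemma prism_ab_card (hm : 0 < m) (hn : 0 < n) :
    Nat.card (Abelianization (PresentedGroup (prismRels m n))) = 4 * n := by
  set A' : Abelianization (PresentedGroup (prismRels m n)) := Abelianization.of pA with hA'
  set B' : Abelianization (PresentedGroup (prismRels m n)) := Abelianization.of pB with hB'
  have hofs := prism_of_ab_surjective (m := m) (n := n)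
  have hr1 : B' * A' * B'⁻¹ * A' = 1 := by
    rw [hA', hB', ← map_inv, ← map_mul, ← map_mul, ← map_mul, prism_rel1, map_one]
  have hr2 : A' ^ m * B' ^ (2 * n) = 1 := by
    rw [hA', hB', ← map_pow, ← map_pow, ← map_mul, prism_rel2, map_one]
  have hA2 : A' ^ 2 = 1 := by rw [← comm_rel1_aux A' B']; exact hr1
  have hAinv : A'⁻¹ = A' := by
    apply inv_eq_of_mul_eq_one_right; rw [← sq]; exact hA2
  have hBA : B' * A' = A'⁻¹ * B' := by rw [hAinv, mul_comm]
  have hA1 : A' ^ (2 * 1) = 1 := by rw [mul_one]; exact hA2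
  have hB2 : B' ^ (2 * n) = A' ^ m := by
    calc B' ^ (2 * n) = (A' ^ m)⁻¹ := eq_inv_of_mul_eq_one_right hr2
      _ = (A'⁻¹) ^ m := (inv_pow _ _).symm
      _ = A' ^ m := by rw [hAinv]
  have htop' : Subgroup.closure ({A', B'} : Set _) = ⊤ := by
    have himg : ({A', B'} : Set (Abelianization (PresentedGroup (prismRels m n)))) =
        Abelianization.of '' {pA, pB} := by
      rw [Set.image_insert_eq, Set.image_singleton]
    rw [himg, ← MonoidHom.map_closure, prism_htop, ← MonoidHom.range_eq_map]
    exact MonoidHom.range_eq_top.2 hofs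
  obtain ⟨hle, hfin⟩ := span_card one_pos hn hBA hA1 hB2 htop'
  rw [one_mul] at hle
  have hdvd : 4 * n ∣ Nat.card (Abelianization (PresentedGroup (prismRels m n))) := by
    rcases Nat.even_or_odd m with he | ho
    · obtain ⟨φ, hφ⟩ := prism_ab_surj_even (m := m) hn he
      have hsurj : Function.Surjective (Abelianization.lift φ) := by
        intro z
        obtain ⟨g, hg⟩ := hφ z
        exact ⟨Abelianization.of g, by rw [Abelianization.lift_apply_of]; exact hg⟩
      have := Subgroup.card_dvd_of_surjective (Abelianization.lift φ) hsurj
      rwa [Nat.card_congr Multiplicative.toAdd, Nat.card_prod, Nat.card_zmod, Nat.card_zmod,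
        show 2 * (2 * n) = 4 * n by ring] at this
    · obtain ⟨φ, hφ⟩ := prism_ab_surj_odd (m := m) hn ho
      have hsurj : Function.Surjective (Abelianization.lift φ) := by
        intro z
        obtain ⟨g, hg⟩ := hφ z
        exact ⟨Abelianization.of g, by rw [Abelianization.lift_apply_of]; exact hg⟩
      have := Subgroup.card_dvd_of_surjective (Abelianization.lift φ) hsurj
      rwa [Nat.card_congr Multiplicative.toAdd, Nat.card_zmod] at this
  haveI := hfin
  have hpos : 0 < Nat.card (Abelianization (PresentedGroup (prismRels m n))) := Nat.card_pos
  exact Nat.le_antisymm hle (Nat.le_of_dvd hpos hdvd)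

lemma prism_card (hm : 0 < m) (hn : 0 < n) (hmn : Nat.Coprime m n) :
    Nat.card (PresentedGroup (prismRels m n)) = 4 * (m * n) := by
  obtain ⟨hle, hfin⟩ := prism_span_card hm hn
  have habdvd : 4 * n ∣ Nat.card (PresentedGroup (prismRels m n)) := by
    have := Subgroup.card_dvd_of_surjective
      (Abelianization.of (G := PresentedGroup (prismRels m n)))
      (prism_of_ab_surjective (m := m) (n := n))
    rwa [prism_ab_card hm hn] at this
  have hdvd : 4 * (m * n) ∣ Nat.card (PresentedGroup (prismRels m n)) := by
    rcases Nat.even_or_odd n with he | ho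
    · -- n even, hence m odd
      have hmodd : Odd m := by
        rcases Nat.even_or_odd m with hme | hmo
        · exfalso
          obtain ⟨s, hs⟩ := hme
          obtain ⟨t, ht⟩ := he
          have : 2 ∣ Nat.gcd m n := Nat.dvd_gcd ⟨s, by omega⟩ ⟨t, by omega⟩
          rw [hmn] at this
          omega
        · exact hmo
      have hdm : m ∣ Nat.card (PresentedGroup (prismRels m n)) :=
        dvd_trans (dvd_mul_left m 2) (prism_dvd_dihedral (n := n) hm)
      have hcop : Nat.Coprime m (4 * n) := by
        have h2 : Nat.Coprime m 2 := hmodd.coprime_two_right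
        have h4 : Nat.Coprime m 4 := by
          have := h2.mul_right h2
          norm_num at this ⊢
          exact this
        exact h4.mul_right hmn
      have := (hcop.symm).mul_dvd_of_dvd_of_dvd habdvd hdm
      rwa [show 4 * n * m = 4 * (m * n) by ring] at this
    · have hdq : 4 * m ∣ Nat.card (PresentedGroup (prismRels m n)) :=
        prism_dvd_quaternion hm ho
      have hdn : n ∣ Nat.card (PresentedGroup (prismRels m n)) :=
        dvd_trans (dvd_mul_left n 4) habdvd
      have hcop : Nat.Coprime (4 * m) n := by
        have h2 : Nat.Coprime n 2 := ho.coprime_two_right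
        have h4 : Nat.Coprime n 4 := by
          have := h2.mul_right h2
          norm_num at this ⊢
          exact this
        exact ((h4.mul_right hmn.symm).symm)
      have := hcop.mul_dvd_of_dvd_of_dvd hdq hdn
      rwa [show 4 * m * n = 4 * (m * n) by ring] at this
  haveI := hfin
  have hpos : 0 < Nat.card (PresentedGroup (prismRels m n)) := Nat.card_pos
  exact Nat.le_antisymm hle (Nat.le_of_dvd hpos hdvd)

end Main

/-- the prism manifold group `G_{m,n}` determines and is determined by
the ordered pair `(m, n)`: if `G_{m,n} ≅ G_{m',n'}` then `m = m'` and `n = n'`. -/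
theorem prismGroup_determines_pair (m n m' n' : ℕ)
    (hm : 0 < m) (hn : 0 < n) (hmn : Nat.Coprime m n)
    (hm' : 0 < m') (hn' : 0 < n') (hmn' : Nat.Coprime m' n')
    (h : Nonempty (PresentedGroup (prismRels m n) ≃* PresentedGroup (prismRels m' n'))) :
    m = m' ∧ n = n' := by
  obtain ⟨e⟩ := h
  have hcard : 4 * (m * n) = 4 * (m' * n') := by
    rw [← prism_card hm hn hmn, ← prism_card hm' hn' hmn', Nat.card_congr e.toEquiv]
  have hab : 4 * n = 4 * n' := by
    rw [← prism_ab_card hm hn, ← prism_ab_card hm' hn',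
      Nat.card_congr e.abelianizationCongr.toEquiv]
  have hn2 : n = n' := by omega
  subst hn2
  have hmm : m * n = m' * n := by omega
  exact ⟨Nat.eq_of_mul_eq_mul_right hn hmm, rfl⟩
end

section
/- Let Λ be a lattice in ℝ², let A be an orthogonal 2×2 real matrix with det A = −1 such that A·Λ = Λ, and let b ∈ ℝ² satisfy A·b + b ∈ Λ. Assume that the induced map of the flat torus ℝ²/Λ is fixed-point free, i.e. A·x + b − x ∉ Λ for every x ∈ ℝ². Then Λ admits an orthogonal ℤ-basis adapted to A: there exist u, w ∈ Λ such that (u, w) is a ℤ-basis of Λ, ⟨u, w⟩ = 0, A·u = u and A·w = −w. In particular the flat torus ℝ²/Λ is a rectangular torus. -/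
noncomputable section

open Matrix

/-- The determinant of the `2×2` matrix with columns `v` and `w`. -/
def det2 (v w : E2) : ℝ := v 0 * w 1 - v 1 * w 0

/-- `(v, w)` is a `ℤ`-basis of the additive subgroup `Λ ⊆ ℝ²`. -/
def IsZBasis (Λ : AddSubgroup E2) (v w : E2) : Prop :=
  v ∈ Λ ∧ w ∈ Λ ∧ ∀ x ∈ Λ, ∃! c : ℤ × ℤ, x = c.1 • v + c.2 • w

/-- A lattice in `ℝ²`: the `ℤ`-span of an `ℝ`-basis of `ℝ²`. -/
def IsLattice (Λ : AddSubgroup E2) : Prop :=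
  ∃ v w : E2, LinearIndependent ℝ ![v, w] ∧ IsZBasis Λ v w

/-- The action of a `2×2` matrix on `ℝ²` (matrix–vector multiplication). -/
def matVec (A : Matrix (Fin 2) (Fin 2) ℝ) (x : E2) : E2 := WithLp.toLp 2 (A.mulVec x)

lemma e2_zsmul_apply (n : ℤ) (x : E2) (i : Fin 2) : (n • x) i = n * x i := by
  rw [← Int.cast_smul_eq_zsmul ℝ]; rfl

lemma e2_ext {x y : E2} (h0 : x 0 = y 0) (h1 : x 1 = y 1) : x = y := by
  apply PiLp.ext; intro i; fin_cases i <;> assumption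

lemma line_aux {p q x0 x1 y0 y1 : ℝ} (hpq : p^2 + q^2 = 1)
    (hx0 : p*x0 + q*x1 = x0) (hx1 : q*x0 - p*x1 = x1)
    (hy0 : p*y0 + q*y1 = y0) (hy1 : q*y0 - p*y1 = y1) :
    x0*y1 - x1*y0 = 0 := by
  by_cases hq : q = 0
  · subst hq
    have hp2 : p * p = 1 := by nlinarith
    rcases mul_self_eq_one_iff.1 hp2 with hp | hp
    · rw [hp] at hx1 hy1
      rw [show x1 = 0 by linarith, show y1 = 0 by linarith]; ring
    · rw [hp] at hx0 hy0
      rw [show x0 = 0 by linarith, show y0 = 0 by linarith]; ring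
  · have key : 2*q^2*(x0*y1 - x1*y0) = 0 := by
      linear_combination (q*y1) * hx1 + ((1+p)*x1) * hy0 - (q*y0) * hx0 - ((1-p)*x0) * hy1 + (x0*y1 - x1*y0) * hpq
    have h2 : (2*q^2 : ℝ) ≠ 0 := by positivity
    exact (mul_eq_zero.1 key).resolve_left h2

lemma det2_ne_of_li {v w : E2} (h : LinearIndependent ℝ ![v, w]) : det2 v w ≠ 0 := by
  rw [LinearIndependent.pair_iff] at h
  intro hd
  unfold det2 at hd
  have e1 : (w 1) • v + (-(v 1)) • w = 0 := by
    apply e2_ext <;> simp <;> nlinarith [hd]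
  have e2 : (w 0) • v + (-(v 0)) • w = 0 := by
    apply e2_ext <;> simp <;> nlinarith [hd]
  obtain ⟨ha, hb⟩ := h _ _ e1
  obtain ⟨hc, he⟩ := h _ _ e2
  have hv : v = 0 := e2_ext (by simpa using he) (by simpa using hb)
  have := (h 1 0 (by rw [hv]; simp)).1
  exact one_ne_zero this

lemma refl_entries (A : Matrix (Fin 2) (Fin 2) ℝ) (hA : Aᵀ * A = 1) (hdet : A.det = -1) :
    A 1 0 = A 0 1 ∧ A 1 1 = - A 0 0 ∧ (A 0 0)^2 + (A 0 1)^2 = 1 := by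
  have h00 := congrFun (congrFun hA 0) 0
  have h01 := congrFun (congrFun hA 0) 1
  have h11 := congrFun (congrFun hA 1) 1
  simp [Matrix.mul_apply, Fin.sum_univ_two, Matrix.transpose_apply, Matrix.one_apply] at h00 h01 h11
  rw [Matrix.det_fin_two] at hdet
  have hr : A 1 0 = A 0 1 := by
    linear_combination A 1 1 * h01 - A 0 1 * hdet - A 1 0 * h11
  have hs : A 1 1 = - A 0 0 := by
    linear_combination A 0 0 * hdet + A 1 0 * h01 - A 1 1 * h00
  exact ⟨hr, hs, by rw [hr] at h00; linear_combination h00⟩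

section Coords
variable (Λ : AddSubgroup E2) (v₁ v₂ : E2) (hB : IsZBasis Λ v₁ v₂)

open scoped Classical in
noncomputable def crd (x : E2) : ℤ × ℤ :=
  if h : x ∈ Λ then ((hB.2.2 x h).exists).choose else 0

lemma crd_spec {x : E2} (h : x ∈ Λ) :
    x = (crd Λ v₁ v₂ hB x).1 • v₁ + (crd Λ v₁ v₂ hB x).2 • v₂ := by
  classical
  rw [crd, dif_pos h]
  exact ((hB.2.2 x h).exists).choose_spec

lemma crd_unique {x : E2} (h : x ∈ Λ) (c : ℤ × ℤ) (hc : x = c.1 • v₁ + c.2 • v₂) :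
    c = crd Λ v₁ v₂ hB x :=
  (hB.2.2 x h).unique hc (crd_spec Λ v₁ v₂ hB h)

lemma crd_add {x y : E2} (hx : x ∈ Λ) (hy : y ∈ Λ) :
    crd Λ v₁ v₂ hB (x + y) = crd Λ v₁ v₂ hB x + crd Λ v₁ v₂ hB y := by
  refine (crd_unique Λ v₁ v₂ hB (Λ.add_mem hx hy) _ ?_).symm
  simp only [Prod.fst_add, Prod.snd_add, add_smul]
  conv_lhs => rw [crd_spec Λ v₁ v₂ hB hx, crd_spec Λ v₁ v₂ hB hy]
  abel

lemma crd_neg {x : E2} (hx : x ∈ Λ) :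
    crd Λ v₁ v₂ hB (-x) = - crd Λ v₁ v₂ hB x := by
  refine (crd_unique Λ v₁ v₂ hB (Λ.neg_mem hx) _ ?_).symm
  simp only [Prod.fst_neg, Prod.snd_neg, neg_smul]
  conv_lhs => rw [crd_spec Λ v₁ v₂ hB hx]
  abel

lemma crd_smul (c : ℤ) {x : E2} (hx : x ∈ Λ) :
    crd Λ v₁ v₂ hB (c • x) = c • crd Λ v₁ v₂ hB x := by
  refine (crd_unique Λ v₁ v₂ hB (Λ.zsmul_mem hx c) _ ?_).symm
  simp only [Prod.smul_fst, Prod.smul_snd, smul_eq_mul]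
  conv_lhs => rw [crd_spec Λ v₁ v₂ hB hx]
  rw [smul_add, smul_smul, smul_smul]

lemma crd_zero : crd Λ v₁ v₂ hB 0 = 0 :=
  (crd_unique Λ v₁ v₂ hB Λ.zero_mem 0 (by simp)).symm

end Coords

lemma gen_of_line (Λ : AddSubgroup E2) (v₁ v₂ : E2)
    (hli : LinearIndependent ℝ ![v₁, v₂]) (hB : IsZBasis Λ v₁ v₂)
    (P : E2 → Prop) (P0 : P 0)
    (Padd : ∀ x y, P x → P y → P (x + y)) (Pneg : ∀ x, P x → P (-x))
    (Psmul : ∀ (c : ℤ) x, P x → P (c • x))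
    (Pline : ∀ x y, P x → P y → det2 x y = 0)
    (g : E2) (hgΛ : g ∈ Λ) (hPg : P g) (hg0 : g ≠ 0) :
    ∃ u, u ∈ Λ ∧ P u ∧ u ≠ 0 ∧ ∀ x ∈ Λ, P x → ∃ c : ℤ, x = c • u := by
  classical
  set m₀ : ℤ := (crd Λ v₁ v₂ hB g).1 with hm₀
  set n₀ : ℤ := (crd Λ v₁ v₂ hB g).2 with hn₀
  have hg00 : ¬(m₀ = 0 ∧ n₀ = 0) := by
    rintro ⟨h1, h2⟩
    apply hg0
    have := crd_spec Λ v₁ v₂ hB hgΛ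
    rw [← hm₀, ← hn₀, h1, h2] at this
    simpa using this
  -- injectivity on the line
  have Inj : ∀ x, x ∈ Λ → P x →
      m₀ * (crd Λ v₁ v₂ hB x).1 + n₀ * (crd Λ v₁ v₂ hB x).2 = 0 → x = 0 := by
    intro x hx hPx hl
    have hdet : det2 x g = 0 := Pline x g hPx hPg
    have hx' := crd_spec Λ v₁ v₂ hB hx
    have hg' := crd_spec Λ v₁ v₂ hB hgΛ
    have hexp : det2 x g =
        (((crd Λ v₁ v₂ hB x).1 : ℝ) * n₀ - ((crd Λ v₁ v₂ hB x).2 : ℝ) * m₀) * det2 v₁ v₂ := by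
      conv_lhs => rw [det2, hx', hg']
      rw [det2, ← hm₀, ← hn₀]
      simp only [PiLp.add_apply, e2_zsmul_apply]
      push_cast
      ring
    have hprop : ((crd Λ v₁ v₂ hB x).1 : ℝ) * n₀ - ((crd Λ v₁ v₂ hB x).2 : ℝ) * m₀ = 0 := by
      rcases mul_eq_zero.1 (hexp ▸ hdet) with h | h
      · exact h
      · exact absurd h (det2_ne_of_li hli)
    have hpropZ : (crd Λ v₁ v₂ hB x).1 * n₀ - (crd Λ v₁ v₂ hB x).2 * m₀ = 0 := by exact_mod_cast hprop
    have hm0 : (crd Λ v₁ v₂ hB x).1 * (m₀ * m₀ + n₀ * n₀) = 0 := by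
      linear_combination m₀ * hl + n₀ * hpropZ
    have hn0 : (crd Λ v₁ v₂ hB x).2 * (m₀ * m₀ + n₀ * n₀) = 0 := by
      linear_combination n₀ * hl - m₀ * hpropZ
    have hsum : m₀ * m₀ + n₀ * n₀ ≠ 0 := by
      intro h
      exact hg00 ⟨by nlinarith [mul_self_nonneg m₀, mul_self_nonneg n₀],
                  by nlinarith [mul_self_nonneg m₀, mul_self_nonneg n₀]⟩
    have hm : (crd Λ v₁ v₂ hB x).1 = 0 := by
      rcases mul_eq_zero.1 hm0 with h | h
      · exact h
      · exact absurd h hsum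
    have hn : (crd Λ v₁ v₂ hB x).2 = 0 := by
      rcases mul_eq_zero.1 hn0 with h | h
      · exact h
      · exact absurd h hsum
    rw [hx', hm, hn]
    simp
  -- the image subgroup of ℤ
  let H : AddSubgroup ℤ :=
    { carrier := {z | ∃ x, x ∈ Λ ∧ P x ∧ m₀ * (crd Λ v₁ v₂ hB x).1 + n₀ * (crd Λ v₁ v₂ hB x).2 = z}
      zero_mem' := ⟨0, Λ.zero_mem, P0, by rw [crd_zero]; simp⟩
      add_mem' := by
        rintro z₁ z₂ ⟨x, hx, hPx, hlx⟩ ⟨y, hy, hPy, hly⟩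
        refine ⟨x + y, Λ.add_mem hx hy, Padd x y hPx hPy, ?_⟩
        rw [crd_add Λ v₁ v₂ hB hx hy, Prod.fst_add, Prod.snd_add, ← hlx, ← hly]; ring
      neg_mem' := by
        rintro z ⟨x, hx, hPx, hlx⟩
        refine ⟨-x, Λ.neg_mem hx, Pneg x hPx, ?_⟩
        rw [crd_neg Λ v₁ v₂ hB hx, Prod.fst_neg, Prod.snd_neg, ← hlx]; ring }
  obtain ⟨d, hd⟩ := Int.subgroup_cyclic H
  have hdH : d ∈ H := by
    rw [hd]; exact AddSubgroup.subset_closure (Set.mem_singleton d)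
  obtain ⟨u, huΛ, hPu, hlu⟩ := hdH
  have hgH : (m₀ * m₀ + n₀ * n₀ : ℤ) ∈ H := ⟨g, hgΛ, hPg, rfl⟩
  have hd0 : d ≠ 0 := by
    intro h0
    rw [hd, h0, AddSubgroup.mem_closure_singleton] at hgH
    obtain ⟨n, hn⟩ := hgH
    simp at hn
    exact hg00 ⟨by nlinarith [mul_self_nonneg m₀, mul_self_nonneg n₀],
                by nlinarith [mul_self_nonneg m₀, mul_self_nonneg n₀]⟩
  refine ⟨u, huΛ, hPu, ?_, ?_⟩
  · intro h0
    rw [h0, crd_zero] at hlu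
    simp at hlu
    exact hd0 hlu.symm
  · intro x hx hPx
    have hxH : (m₀ * (crd Λ v₁ v₂ hB x).1 + n₀ * (crd Λ v₁ v₂ hB x).2 : ℤ) ∈ H := ⟨x, hx, hPx, rfl⟩
    rw [hd, AddSubgroup.mem_closure_singleton] at hxH
    obtain ⟨c, hc⟩ := hxH
    refine ⟨c, ?_⟩
    have hcuΛ : c • u ∈ Λ := Λ.zsmul_mem huΛ c
    have hy : x - c • u ∈ Λ := Λ.sub_mem hx hcuΛ
    have hPy : P (x - c • u) := by
      rw [sub_eq_add_neg]
      exact Padd _ _ hPx (Pneg _ (Psmul c u hPu))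
    have hcrd : crd Λ v₁ v₂ hB (x - c • u) = crd Λ v₁ v₂ hB x - c • crd Λ v₁ v₂ hB u := by
      rw [sub_eq_add_neg, crd_add Λ v₁ v₂ hB hx (Λ.neg_mem hcuΛ), crd_neg Λ v₁ v₂ hB hcuΛ,
        crd_smul Λ v₁ v₂ hB c huΛ, sub_eq_add_neg]
    have hly : m₀ * (crd Λ v₁ v₂ hB (x - c•u)).1 + n₀ * (crd Λ v₁ v₂ hB (x - c•u)).2 = 0 := by
      rw [hcrd, Prod.fst_sub, Prod.snd_sub, Prod.smul_fst, Prod.smul_snd, smul_eq_mul, smul_eq_mul]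
      have hcd : c • d = m₀ * (crd Λ v₁ v₂ hB x).1 + n₀ * (crd Λ v₁ v₂ hB x).2 := hc
      rw [smul_eq_mul] at hcd
      linear_combination - hcd - c * hlu
    have := Inj _ hy hPy hly
    exact (sub_eq_zero.1 this)

/-- if an orthogonal matrix `A` with `det A = −1` preserves a lattice
`Λ ⊆ ℝ²` and `x ↦ A·x + b` descends to a fixed-point-free isometry of the
flat torus `ℝ²/Λ`, then `Λ` has an orthogonal `ℤ`-basis `(u, w)` with `A·u = u` and
`A·w = −w`; in particular `ℝ²/Λ` is a rectangular torus. -/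
theorem lattice_of_klein_involution_is_rectangular
    (Λ : AddSubgroup E2) (hΛ : IsLattice Λ)
    (A : Matrix (Fin 2) (Fin 2) ℝ) (hA : Aᵀ * A = 1) (hdet : A.det = -1)
    (hAΛ : ∀ x : E2, x ∈ Λ ↔ matVec A x ∈ Λ)
    (b : E2) (hb : matVec A b + b ∈ Λ)
    (hfree : ∀ x : E2, matVec A x + b - x ∉ Λ) :
    ∃ u w : E2, IsZBasis Λ u w ∧ (inner ℝ u w : ℝ) = 0 ∧
      matVec A u = u ∧ matVec A w = -w := by
  obtain ⟨v₁, v₂, hli, hB⟩ := hΛ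
  obtain ⟨hr, hs, hpq⟩ := refl_entries A hA hdet
  -- coordinate form of the action
  have mv0 : ∀ x : E2, matVec A x 0 = A 0 0 * x 0 + A 0 1 * x 1 := by
    intro x; simp [matVec, Matrix.mulVec, dotProduct, Fin.sum_univ_two]
  have mv1 : ∀ x : E2, matVec A x 1 = A 0 1 * x 0 - A 0 0 * x 1 := by
    intro x; simp [matVec, Matrix.mulVec, dotProduct, Fin.sum_univ_two, hr, hs]; ring
  -- linearity and involutivity
  have madd : ∀ x y : E2, matVec A (x + y) = matVec A x + matVec A y := by
    intro x y; apply e2_ext <;> simp [mv0, mv1, PiLp.add_apply] <;> ring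
  have msub : ∀ x y : E2, matVec A (x - y) = matVec A x - matVec A y := by
    intro x y; apply e2_ext <;> simp [mv0, mv1, PiLp.sub_apply] <;> ring
  have mneg : ∀ x : E2, matVec A (-x) = - matVec A x := by
    intro x; apply e2_ext <;> simp [mv0, mv1, PiLp.neg_apply] <;> ring
  have msmul : ∀ (c : ℝ) (x : E2), matVec A (c • x) = c • matVec A x := by
    intro c x; apply e2_ext <;> simp [mv0, mv1, PiLp.smul_apply, smul_eq_mul] <;> ring
  have mzsmul : ∀ (c : ℤ) (x : E2), matVec A (c • x) = c • matVec A x := by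
    intro c x; apply e2_ext <;> simp [mv0, mv1, e2_zsmul_apply] <;> ring
  have mzero : matVec A (0 : E2) = 0 := by
    apply e2_ext <;> simp [mv0, mv1]
  have AA : ∀ x : E2, matVec A (matVec A x) = x := by
    intro x
    apply e2_ext
    · rw [mv0, mv0 x, mv1 x]; linear_combination (x 0) * hpq
    · rw [mv1, mv0 x, mv1 x]; linear_combination (x 1) * hpq
  -- the two eigenlines
  have linefix : ∀ x y : E2, matVec A x = x → matVec A y = y → det2 x y = 0 := by
    intro x y hx hy
    have hx0 : matVec A x 0 = x 0 := by rw [hx]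
    have hx1 : matVec A x 1 = x 1 := by rw [hx]
    have hy0 : matVec A y 0 = y 0 := by rw [hy]
    have hy1 : matVec A y 1 = y 1 := by rw [hy]
    rw [mv0] at hx0 hy0; rw [mv1] at hx1 hy1
    exact line_aux hpq hx0 hx1 hy0 hy1
  have lineneg : ∀ x y : E2, matVec A x = -x → matVec A y = -y → det2 x y = 0 := by
    intro x y hx hy
    have hx0 : matVec A x 0 = (-x) 0 := by rw [hx]
    have hx1 : matVec A x 1 = (-x) 1 := by rw [hx]
    have hy0 : matVec A y 0 = (-y) 0 := by rw [hy]
    have hy1 : matVec A y 1 = (-y) 1 := by rw [hy]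
    rw [mv0] at hx0 hy0; rw [mv1] at hx1 hy1
    simp only [PiLp.neg_apply] at hx0 hx1 hy0 hy1
    have hpq' : (-(A 0 0))^2 + (-(A 0 1))^2 = 1 := by linear_combination hpq
    exact line_aux hpq' (by linarith) (by linarith) (by linarith) (by linarith)
  have innerfix : ∀ x y : E2, matVec A x = x → matVec A y = -y → (inner ℝ x y : ℝ) = 0 := by
    intro x y hx hy
    have hx0 : matVec A x 0 = x 0 := by rw [hx]
    have hx1 : matVec A x 1 = x 1 := by rw [hx]
    have hy0 : matVec A y 0 = (-y) 0 := by rw [hy]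
    have hy1 : matVec A y 1 = (-y) 1 := by rw [hy]
    rw [mv0] at hx0 hy0; rw [mv1] at hx1 hy1
    simp only [PiLp.neg_apply] at hy0 hy1
    have key : 2 * (x 0 * y 0 + x 1 * y 1) = 0 := by
      linear_combination (-(y 0)) * hx0 + (-(y 1)) * hx1 + (x 0) * hy0 + (x 1) * hy1
    simp [PiLp.inner_apply, Fin.sum_univ_two, RCLike.inner_apply]
    linarith
  -- nonzero fixed vector in Λ
  have fixprop : ∀ v : E2, matVec A (v + matVec A v) = v + matVec A v := by
    intro v; rw [madd, AA]; exact add_comm _ _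
  have negprop : ∀ v : E2, matVec A (v - matVec A v) = -(v - matVec A v) := by
    intro v; rw [msub, AA]; abel
  have memS : ∀ v : E2, v ∈ Λ → v + matVec A v ∈ Λ := by
    intro v hv; exact Λ.add_mem hv ((hAΛ v).1 hv)
  have memD : ∀ v : E2, v ∈ Λ → v - matVec A v ∈ Λ := by
    intro v hv; exact Λ.sub_mem hv ((hAΛ v).1 hv)
  have exgP : ∃ g, g ∈ Λ ∧ matVec A g = g ∧ g ≠ 0 := by
    by_cases h1 : v₁ + matVec A v₁ = 0
    · have h2 : v₂ + matVec A v₂ ≠ 0 := by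
        intro h2
        have e1 : matVec A v₁ = -v₁ := by rw [eq_neg_iff_add_eq_zero, add_comm]; exact h1
        have e2 : matVec A v₂ = -v₂ := by rw [eq_neg_iff_add_eq_zero, add_comm]; exact h2
        exact det2_ne_of_li hli (lineneg v₁ v₂ e1 e2)
      exact ⟨v₂ + matVec A v₂, memS v₂ hB.2.1, fixprop v₂, h2⟩
    · exact ⟨v₁ + matVec A v₁, memS v₁ hB.1, fixprop v₁, h1⟩
  have exgN : ∃ g, g ∈ Λ ∧ matVec A g = -g ∧ g ≠ 0 := by
    by_cases h1 : v₁ - matVec A v₁ = 0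
    · have h2 : v₂ - matVec A v₂ ≠ 0 := by
        intro h2
        have e1 : matVec A v₁ = v₁ := by rw [sub_eq_zero] at h1; exact h1.symm
        have e2 : matVec A v₂ = v₂ := by rw [sub_eq_zero] at h2; exact h2.symm
        exact det2_ne_of_li hli (linefix v₁ v₂ e1 e2)
      exact ⟨v₂ - matVec A v₂, memD v₂ hB.2.1, negprop v₂, h2⟩
    · exact ⟨v₁ - matVec A v₁, memD v₁ hB.1, negprop v₁, h1⟩
  obtain ⟨gP, hgPΛ, hgPfix, hgP0⟩ := exgP
  obtain ⟨gN, hgNΛ, hgNneg, hgN0⟩ := exgN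
  -- generators of the two eigenline sublattices
  obtain ⟨u, huΛ, hufix, hu0, hu⟩ :=
    gen_of_line Λ v₁ v₂ hli hB (fun x => matVec A x = x) mzero
      (fun x y hx hy => by show matVec A (x + y) = x + y; rw [madd, hx, hy])
      (fun x hx => by show matVec A (-x) = -x; rw [mneg, hx])
      (fun c x hx => by show matVec A (c • x) = c • x; rw [mzsmul, hx])
      linefix gP hgPΛ hgPfix hgP0
  obtain ⟨w, hwΛ, hwneg, hw0, hw⟩ :=
    gen_of_line Λ v₁ v₂ hli hB (fun x => matVec A x = -x)
      (by show matVec A 0 = -0; rw [mzero]; simp)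
      (fun x y hx hy => by show matVec A (x + y) = -(x + y); rw [madd, hx, hy]; abel)
      (fun x hx => by show matVec A (-x) = -(-x); rw [mneg, hx])
      (fun c x hx => by show matVec A (c • x) = -(c • x); rw [mzsmul, hx, smul_neg])
      lineneg gN hgNΛ hgNneg hgN0
  -- halving
  have halfeq : ∀ y z : E2, y + y = z + z → y = z := by
    intro y z h
    have h0 : (y + y) 0 = (z + z) 0 := by rw [h]
    have h1 : (y + y) 1 = (z + z) 1 := by rw [h]
    simp only [PiLp.add_apply] at h0 h1
    exact e2_ext (by linarith) (by linarith)
  have zsmul_cancel : ∀ (z : E2), z ≠ 0 → ∀ (c d : ℤ), c • z = d • z → c = d := by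
    intro z hz c d h
    have : ((c - d : ℤ) : ℝ) • z = 0 := by
      rw [Int.cast_smul_eq_zsmul, sub_smul, h, sub_self]
    rcases smul_eq_zero.1 this with h' | h'
    · have : (c - d : ℤ) = 0 := by exact_mod_cast h'
      omega
    · exact absurd h' hz
  -- decomposition: 2λ = m u + n w
  have decomp : ∀ lam, lam ∈ Λ → ∃ m n : ℤ, lam + matVec A lam = m • u ∧ lam - matVec A lam = n • w := by
    intro lam hlam
    obtain ⟨m, hm⟩ := hu _ (memS lam hlam) (fixprop lam)
    obtain ⟨n, hn⟩ := hw _ (memD lam hlam) (negprop lam)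
    exact ⟨m, n, hm, hn⟩
  -- the translation coefficient
  obtain ⟨k, hk⟩ : ∃ k : ℤ, matVec A b + b = k • u := by
    apply hu _ hb
    rw [madd, AA]; exact add_comm _ _
  -- fixed point given a lattice point with matching symmetric part
  have no_fix : ∀ lam, lam ∈ Λ → lam + matVec A lam = matVec A b + b → False := by
    intro lam hlam hrel
    apply hfree ((1/2 : ℝ) • (b - lam))
    have hAb : matVec A b = lam + matVec A lam - b := by
      rw [eq_sub_iff_add_eq]; exact hrel.symm
    have : matVec A ((1/2 : ℝ) • (b - lam)) + b - (1/2 : ℝ) • (b - lam) = lam := by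
      rw [msmul, msub, hAb]
      module
    rw [this]; exact hlam
  -- k is odd
  have hkodd : ∃ j : ℤ, k = 2 * j + 1 := by
    rcases Int.even_or_odd k with ⟨j, hj⟩ | ⟨j, hj⟩
    · exfalso
      apply no_fix (j • u) (Λ.zsmul_mem huΛ j)
      rw [mzsmul, hufix, hk, hj, add_smul]
    · exact ⟨j, hj⟩
  obtain ⟨j, hj⟩ := hkodd
  -- every lattice vector decomposes over ℤu ⊕ ℤw
  have key : ∀ lam, lam ∈ Λ → ∃ m' n' : ℤ, lam = m' • u + n' • w := by
    intro lam hlam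
    obtain ⟨m, n, hm, hn⟩ := decomp lam hlam
    have hll : lam + lam = m • u + n • w := by
      have : lam + lam = (lam + matVec A lam) + (lam - matVec A lam) := by abel
      rw [this, hm, hn]
    rcases Int.even_or_odd m with ⟨m', hm'⟩ | ⟨m', hm'⟩ <;>
      rcases Int.even_or_odd n with ⟨n', hn'⟩ | ⟨n', hn'⟩
    · -- even, even
      refine ⟨m', n', halfeq _ _ ?_⟩
      rw [hll, hm', hn', add_smul, add_smul]; abel
    · -- even m, odd n : contradiction
      exfalso
      have hyΛ : lam - m' • u ∈ Λ := Λ.sub_mem hlam (Λ.zsmul_mem huΛ m')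
      have hyy : (lam - m' • u) + (lam - m' • u) = n • w := by
        rw [show (lam - m' • u) + (lam - m' • u) = lam + lam - (m' + m') • u by
            rw [add_smul]; abel, hll, hm']
        abel
      have hyneg : matVec A (lam - m' • u) = -(lam - m' • u) := by
        apply halfeq
        have : matVec A ((lam - m' • u) + (lam - m' • u)) = matVec A (lam - m' • u) + matVec A (lam - m' • u) := madd _ _
        rw [← this, hyy, mzsmul, hwneg, smul_neg, ← hyy]
        abel
      obtain ⟨c, hc⟩ := hw _ hyΛ hyneg
      have : (c + c) • w = n • w := by rw [add_smul, ← hc]; exact hyy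
      have := zsmul_cancel w hw0 _ _ this
      omega
    · -- odd m, even n : contradiction
      exfalso
      have hyΛ : lam - n' • w ∈ Λ := Λ.sub_mem hlam (Λ.zsmul_mem hwΛ n')
      have hyy : (lam - n' • w) + (lam - n' • w) = m • u := by
        rw [show (lam - n' • w) + (lam - n' • w) = lam + lam - (n' + n') • w by
            rw [add_smul]; abel, hll, hn']
        abel
      have hyfix : matVec A (lam - n' • w) = lam - n' • w := by
        apply halfeq
        have : matVec A ((lam - n' • w) + (lam - n' • w)) = matVec A (lam - n' • w) + matVec A (lam - n' • w) := madd _ _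
        rw [← this, hyy, mzsmul, hufix, ← hyy]
      obtain ⟨c, hc⟩ := hu _ hyΛ hyfix
      have : (c + c) • u = m • u := by rw [add_smul, ← hc]; exact hyy
      have := zsmul_cancel u hu0 _ _ this
      omega
    · -- odd, odd : contradiction via no_fix
      exfalso
      set μ := lam - m' • u - n' • w with hμdef
      have hμΛ : μ ∈ Λ := Λ.sub_mem (Λ.sub_mem hlam (Λ.zsmul_mem huΛ m')) (Λ.zsmul_mem hwΛ n')
      have hμμ : μ + μ = u + w := by
        rw [hμdef, show (lam - m' • u - n' • w) + (lam - m' • u - n' • w)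
            = lam + lam - (m' + m') • u - (n' + n') • w by rw [add_smul, add_smul]; abel,
          hll, hm', hn']
        rw [show (2*m'+1) • u = (m' + m') • u + u by rw [show (2*m'+1 : ℤ) = (m'+m')+1 by ring, add_smul, one_smul],
          show (2*n'+1) • w = (n' + n') • w + w by rw [show (2*n'+1 : ℤ) = (n'+n')+1 by ring, add_smul, one_smul]]
        abel
      have hμA : matVec A μ + matVec A μ = u - w := by
        rw [← madd, hμμ, madd, hufix, hwneg]; abel
      have hμs : μ + matVec A μ = u := by
        apply halfeq
        rw [show (μ + matVec A μ) + (μ + matVec A μ) = (μ + μ) + (matVec A μ + matVec A μ) by abel,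
          hμμ, hμA]
        abel
      apply no_fix (j • u + μ) (Λ.add_mem (Λ.zsmul_mem huΛ j) hμΛ)
      rw [madd, mzsmul, hufix, hk, hj]
      rw [show (2*j+1) • u = (j + j) • u + u by rw [show (2*j+1 : ℤ) = (j+j)+1 by ring, add_smul, one_smul],
        add_smul]
      rw [show j • u + μ + (j • u + matVec A μ) = (j • u + j • u) + (μ + matVec A μ) by abel, hμs]
  -- orthogonality
  have horth : (inner ℝ u w : ℝ) = 0 := innerfix u w hufix hwneg
  have huu : (inner ℝ u u : ℝ) ≠ 0 := inner_self_ne_zero.2 hu0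
  have hww : (inner ℝ w w : ℝ) ≠ 0 := inner_self_ne_zero.2 hw0
  refine ⟨u, w, ⟨huΛ, hwΛ, ?_⟩, horth, hufix, hwneg⟩
  intro x hx
  obtain ⟨m', n', hmn⟩ := key x hx
  refine ⟨(m', n'), hmn, ?_⟩
  rintro ⟨c1, c2⟩ hy
  have heqz : c1 • u + c2 • w = m' • u + n' • w := by
    have h1 : x = c1 • u + c2 • w := hy
    exact h1.symm.trans hmn
  have heqr : (c1 : ℝ) • u + (c2 : ℝ) • w = (m' : ℝ) • u + (n' : ℝ) • w := by
    simpa only [Int.cast_smul_eq_zsmul] using heqz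
  have h1 : (c1 : ℝ) * (inner ℝ u u : ℝ) = (m' : ℝ) * (inner ℝ u u : ℝ) := by
    have := congrArg (fun z : E2 => (inner ℝ u z : ℝ)) heqr
    simpa only [inner_add_right, real_inner_smul_right, horth, mul_zero, add_zero] using this
  have h2 : (c2 : ℝ) * (inner ℝ w w : ℝ) = (n' : ℝ) * (inner ℝ w w : ℝ) := by
    have := congrArg (fun z : E2 => (inner ℝ w z : ℝ)) heqr
    have hwu : (inner ℝ w u : ℝ) = 0 := by rw [real_inner_comm]; exact horth
    simpa only [inner_add_right, real_inner_smul_right, hwu, mul_zero, zero_add] using this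
  have hc1 : c1 = m' := by
    have := mul_right_cancel₀ huu h1
    exact_mod_cast this
  have hc2 : c2 = n' := by
    have := mul_right_cancel₀ hww h2
    exact_mod_cast this
  simp [hc1, hc2]
end
end
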